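/- arXiv:1308.5618 — 4 statements merged into one kernel-verified Lean document; each statement's English description precedes it below -/
import Mathlib

section
/- Let F be a tree set. For every w ∈ F, every finite F-maximal suffix code U ⊆ F, and every finite F-maximal prefix code V ⊆ F, the generalized extension graph G_{U,V}(w) is a tree (connected and acyclic). -/
open List

variable {A : Type*}

/-- The `n`-th power `wⁿ` of a word (concatenation). -/
def wordPow (w : List A) (n : ℕ) : List A := (List.replicate n w).flatten

/-- A set of words is factorial if it contains the factors of its elements. -/
def Factorial (F : Set (List A)) : Prop := ∀ ⦃u v : List A⦄, u ∈ F → v <:+: u → v ∈ F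

/-- A set of words is recurrent if it is factorial and any two of its words
occur in a common word of the set, in a prescribed order. -/
def Recurrent (F : Set (List A)) : Prop :=
  Factorial F ∧ ∀ u ∈ F, ∀ w ∈ F, ∃ v : List A, u ++ v ++ w ∈ F

/-- A set of words is uniformly recurrent if it is factorial, right-essential, and
every word of the set occurs in all long enough words of the set. -/
def UniformlyRecurrent (F : Set (List A)) : Prop :=
  Factorial F ∧ (∀ w ∈ F, ∃ a : A, w ++ [a] ∈ F) ∧
    ∀ u ∈ F, ∃ n ≥ 1, ∀ w ∈ F, w.length = n → u <:+: w

/-- A set of words is periodic if it is the set of factors of the powers of a single word. -/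
def Periodic (F : Set (List A)) : Prop :=
  ∃ w : List A, F = {v | ∃ n : ℕ, v <:+: wordPow w n}

/-- `L(w)`, the set of left extensions of `w` in `F`. -/
def LeftExt (F : Set (List A)) (w : List A) : Set A := {a | a :: w ∈ F}

/-- `R(w)`, the set of right extensions of `w` in `F`. -/
def RightExt (F : Set (List A)) (w : List A) : Set A := {a | w ++ [a] ∈ F}

/-- A word is left-special if it has at least two left extensions. -/
def LeftSpecial (F : Set (List A)) (w : List A) : Prop := 2 ≤ (LeftExt F w).ncard

/-- A word is right-special if it has at least two right extensions. -/
def RightSpecial (F : Set (List A)) (w : List A) : Prop := 2 ≤ (RightExt F w).ncard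

/-- A word is bispecial if it is both left-special and right-special. -/
def Bispecial (F : Set (List A)) (w : List A) : Prop := LeftSpecial F w ∧ RightSpecial F w

/-- A set of words is biessential if it is factorial and every one of its words is
biextendable. -/
def Biessential (F : Set (List A)) : Prop :=
  Factorial F ∧ ∀ w ∈ F, ∃ a b : A, a :: (w ++ [b]) ∈ F

/-- The bipartite (simple, undirected) graph on `α ⊕ β` induced by a relation
`E : α → β → Prop`. -/
def bipGraph {α β : Type*} (E : α → β → Prop) : SimpleGraph (α ⊕ β) where
  Adj x y := ∃ a b, E a b ∧ ((x = Sum.inl a ∧ y = Sum.inr b) ∨ (x = Sum.inr b ∧ y = Sum.inl a))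
  symm := by
    constructor
    rintro x y ⟨a, b, h, hc⟩
    exact ⟨a, b, h, by tauto⟩
  loopless := by
    constructor
    rintro x ⟨a, b, h, hc⟩
    rcases hc with ⟨h1, h2⟩ | ⟨h1, h2⟩ <;> simp_all

/-- The extension graph `G(w)` of a word `w`: the bipartite graph on
`L(w) ⊔ R(w)` with an edge between `a` and `b` iff `awb ∈ F`. -/
def extensionGraph (F : Set (List A)) (w : List A) :
    SimpleGraph ({a : A // a ∈ LeftExt F w} ⊕ {b : A // b ∈ RightExt F w}) :=
  bipGraph (fun a b => a.1 :: (w ++ [b.1]) ∈ F)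

/-- A tree set: a biessential set all of whose extension graphs are trees. -/
def IsTreeSet (F : Set (List A)) : Prop :=
  Biessential F ∧ ∀ w ∈ F, (extensionGraph F w).IsTree

/-- The generalized extension graph `G_{U,V}(w)`: the bipartite graph on
`U(w) ⊔ V(w)` with an edge between `ℓ` and `r` iff `ℓwr ∈ F`. -/
def genExtGraph (F : Set (List A)) (U V : Set (List A)) (w : List A) :
    SimpleGraph ({l : List A // l ∈ U ∧ l ++ w ∈ F} ⊕ {r : List A // r ∈ V ∧ w ++ r ∈ F}) :=
  bipGraph (fun l r => l.1 ++ w ++ r.1 ∈ F)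

/-- A prefix code: a set of nonempty words none of which is a proper prefix of another. -/
def IsPrefixCode (U : Set (List A)) : Prop :=
  (∀ u ∈ U, u ≠ []) ∧ ∀ u ∈ U, ∀ v ∈ U, u <+: v → u = v

/-- A suffix code: a set of nonempty words none of which is a proper suffix of another. -/
def IsSuffixCode (U : Set (List A)) : Prop :=
  (∀ u ∈ U, u ≠ []) ∧ ∀ u ∈ U, ∀ v ∈ U, u <:+ v → u = v

/-- An `S`-maximal prefix code: a prefix code contained in `S` and not properly contained
in any prefix code contained in `S`. -/
def IsMaximalPrefixCodeIn (S U : Set (List A)) : Prop :=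
  IsPrefixCode U ∧ U ⊆ S ∧ ∀ W, IsPrefixCode W → W ⊆ S → U ⊆ W → U = W

/-- An `S`-maximal suffix code. -/
def IsMaximalSuffixCodeIn (S U : Set (List A)) : Prop :=
  IsSuffixCode U ∧ U ⊆ S ∧ ∀ W, IsSuffixCode W → W ⊆ S → U ⊆ W → U = W

/-- `Γ_F(x)`, the set of right return words to `x` in `F`. -/
def ReturnWords (F : Set (List A)) (x : List A) : Set (List A) :=
  {r | r ≠ [] ∧ x ++ r ∈ F ∧ ∃ s : List A, s ≠ [] ∧ x ++ r = s ++ x}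

/-- `R_F(x) = Γ_F(x) \ Γ_F(x)A⁺`, the set of first right return words to `x` in `F`. -/
def FirstReturnWords (F : Set (List A)) (x : List A) : Set (List A) :=
  ReturnWords F x \ {r | ∃ r' ∈ ReturnWords F x, ∃ s : List A, s ≠ [] ∧ r = r' ++ s}

/-- The natural map from words to the free group. -/
def wordToFree (w : List A) : FreeGroup A := (w.map FreeGroup.of).prod

/-- `x` is unioccurrent in `y` if `x` occurs exactly once in `y`. -/
def Unioccurrent (x y : List A) : Prop := ∃! p : List A × List A, y = p.1 ++ x ++ p.2

/-- Vertices of the Rauzy graph `G_n`: words of `F` of length `n`. -/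
def RauzyVertex (F : Set (List A)) (n : ℕ) := {w : List A // w ∈ F ∧ w.length = n}

/-- Edges of the Rauzy graph `G_n`: an edge from `x` to `y` labeled `a` whenever
`xa ∈ F ∩ Ay`. -/
def RauzyEdge (F : Set (List A)) (n : ℕ) (x : RauzyVertex F n) (a : A)
    (y : RauzyVertex F n) : Prop :=
  x.1 ++ [a] ∈ F ∧ ∃ b : A, x.1 ++ [a] = b :: y.1

/-- `GenPathLabel E p q g` holds when there is a generalized path (a path which may
traverse edges forwards or backwards) from `p` to `q` in the `A`-labeled graph with
edge relation `E`, whose label (product of contributions in the free group) is `g`. -/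
inductive GenPathLabel {V : Type*} (E : V → A → V → Prop) : V → V → FreeGroup A → Prop
  | nil (v : V) : GenPathLabel E v v 1
  | fwd {p q r : V} {g : FreeGroup A} {a : A} :
      GenPathLabel E p q g → E q a r → GenPathLabel E p r (g * FreeGroup.of a)
  | bwd {p q r : V} {g : FreeGroup A} {a : A} :
      GenPathLabel E p q g → E r a q → GenPathLabel E p r (g * (FreeGroup.of a)⁻¹)

/-- A vertex of a Rauzy graph is special if the corresponding word is left-special
or right-special. -/
def SpecialWord (F : Set (List A)) (w : List A) : Prop := LeftSpecial F w ∨ RightSpecial F w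

/-- Nonempty directed paths in the Rauzy graph `G_n` all of whose intermediate
vertices are non-special, together with their labels. -/
inductive NSPath (F : Set (List A)) (n : ℕ) : RauzyVertex F n → RauzyVertex F n → List A → Prop
  | single {p q : RauzyVertex F n} {a : A} : RauzyEdge F n p a q → NSPath F n p q [a]
  | cons {p q r : RauzyVertex F n} {a : A} {l : List A} :
      RauzyEdge F n p a q → ¬ SpecialWord F q.1 → NSPath F n q r l → NSPath F n p r (a :: l)

/-- The Rauzy graph `G_n` is of the first infinite type with respect to the special
vertices `x, y` and the words `u, v, w, t`: `x` and `y` are the only special vertices and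
the simple directed paths between them with non-special intermediate vertices are exactly
`x → x` labeled `u`, `x → y` labeled `v`, `y → y` labeled `w` and `y → x` labeled `t`. -/
def FirstInfiniteType (F : Set (List A)) (n : ℕ) (x y : RauzyVertex F n)
    (u v w t : List A) : Prop :=
  x ≠ y ∧ SpecialWord F x.1 ∧ SpecialWord F y.1 ∧
    (∀ z : RauzyVertex F n, SpecialWord F z.1 → z = x ∨ z = y) ∧
    (∀ p q : RauzyVertex F n, (p = x ∨ p = y) → (q = x ∨ q = y) → ∀ l : List A,
      (NSPath F n p q l ↔ ((p = x ∧ q = x ∧ l = u) ∨ (p = x ∧ q = y ∧ l = v) ∨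
        (p = y ∧ q = y ∧ l = w) ∨ (p = y ∧ q = x ∧ l = t))))

open SimpleGraph

section GraphInfra

variable {V W : Type*} {G : SimpleGraph V} {H : SimpleGraph W}

lemma tsIso_isTree (e : G ≃g H) (h : G.IsTree) : H.IsTree := by
  constructor
  · exact e.connected_iff.mp h.isConnected
  · intro v c hc
    exact h.IsAcyclic _ ((SimpleGraph.Walk.map_isCycle_iff_of_injective
      (f := e.symm.toHom) e.symm.toEquiv.injective).mpr hc)

lemma tsReachable_delete {x y v w : V} (hvw : (G \ fromEdgeSet {s(v,w)}).Reachable v w)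
    (h : G.Reachable x y) : (G \ fromEdgeSet {s(v,w)}).Reachable x y := by
  obtain ⟨p⟩ := h
  induction p with
  | nil => exact Reachable.refl _
  | @cons x' y' z' hadj p ih =>
    refine Reachable.trans ?_ ih
    by_cases he : s(x', y') = s(v, w)
    · rw [Sym2.eq_iff] at he
      rcases he with ⟨rfl, rfl⟩ | ⟨rfl, rfl⟩
      · exact hvw
      · exact hvw.symm
    · refine Adj.reachable ?_
      rw [sdiff_adj, fromEdgeSet_adj]
      exact ⟨hadj, fun hh => he hh.1⟩

lemma tsConnected_delete_of_cycle (hG : G.Connected) {v : V} {c : G.Walk v v} (hc : c.IsCycle) :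
    ∃ e ∈ G.edgeSet, (G \ fromEdgeSet {e}).Connected := by
  cases c with
  | nil => exact absurd hc Walk.IsCycle.not_of_nil
  | @cons _ b _ ha p =>
    refine ⟨s(v, b), ha, ?_⟩
    have hbr : ¬ G.IsBridge s(v, b) := by
      rw [isBridge_iff_forall_cycle_notMem ha]
      intro h2
      exact h2 _ hc (by simp [Walk.edges_cons])
    rw [isBridge_iff] at hbr
    push_neg at hbr
    have hreach : (G \ fromEdgeSet {s(v, b)}).Reachable v b := hbr
    have : Nonempty V := hG.nonempty
    exact ⟨fun x y => tsReachable_delete hreach (hG.preconnected x y)⟩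

lemma tsCard_le_of_connected (n : ℕ) : ∀ {V : Type*} [Fintype V] (G : SimpleGraph V),
    Nat.card G.edgeSet = n → G.Connected → Fintype.card V ≤ n + 1 := by
  induction n using Nat.strong_induction_on with
  | _ n ih =>
    intro V _ G hn hG
    classical
    by_cases hac : G.IsAcyclic
    · have ht : SimpleGraph.IsTree G := ⟨hG, hac⟩
      have : Fintype G.edgeSet := Fintype.ofFinite _
      have h2 := ht.card_edgeFinset
      rw [edgeFinset_card] at h2
      rw [Nat.card_eq_fintype_card] at hn
      omega
    · simp only [IsAcyclic] at hac
      push_neg at hac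
      obtain ⟨v, c, hc⟩ := hac
      obtain ⟨e, heG, hconn⟩ := tsConnected_delete_of_cycle hG hc
      have hfin : G.edgeSet.Finite := Set.toFinite _
      have hedel : (G \ fromEdgeSet {e}).edgeSet = G.edgeSet \ {e} := by
        have := edgeSet_deleteEdges (G := G) {e}
        rwa [deleteEdges] at this
      rw [Nat.card_coe_set_eq] at hn
      have hcard : Nat.card (G \ fromEdgeSet {e}).edgeSet = n - 1 := by
        rw [hedel, Nat.card_coe_set_eq, Set.ncard_diff_singleton_of_mem heG, hn]
      have hn1 : 1 ≤ n := by
        have : 0 < G.edgeSet.ncard := (Set.ncard_pos hfin).mpr ⟨e, heG⟩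
        omega
      have := ih (n-1) (by omega) (G \ fromEdgeSet {e}) hcard hconn
      omega

lemma tsIsTree_of_card [Finite V] (hG : G.Connected)
    (hcard : Nat.card V = Nat.card G.edgeSet + 1) : G.IsTree := by
  classical
  have : Fintype V := Fintype.ofFinite V
  refine ⟨hG, ?_⟩
  intro v c hc
  obtain ⟨e, heG, hconn⟩ := tsConnected_delete_of_cycle hG hc
  have hfin : G.edgeSet.Finite := Set.toFinite _
  have hedel : (G \ fromEdgeSet {e}).edgeSet = G.edgeSet \ {e} := by
    have := edgeSet_deleteEdges (G := G) {e}
    rwa [deleteEdges] at this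
  have hpos : 0 < G.edgeSet.ncard := (Set.ncard_pos hfin).mpr ⟨e, heG⟩
  have hcard' : Nat.card (G \ fromEdgeSet {e}).edgeSet = G.edgeSet.ncard - 1 := by
    rw [hedel, Nat.card_coe_set_eq, Set.ncard_diff_singleton_of_mem heG]
  have hle := tsCard_le_of_connected _ (G \ fromEdgeSet {e}) hcard' hconn
  rw [Nat.card_coe_set_eq] at hcard
  rw [Nat.card_eq_fintype_card] at hcard
  omega

lemma tsIsTree_nat_card {V : Type*} [Finite V] {G : SimpleGraph V} (h : G.IsTree) :
    Nat.card V = Nat.card G.edgeSet + 1 := by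
  classical
  have : Fintype V := Fintype.ofFinite V
  have : Fintype G.edgeSet := Fintype.ofFinite _
  have h2 := h.card_edgeFinset
  rw [edgeFinset_card] at h2
  rw [Nat.card_eq_fintype_card, Nat.card_eq_fintype_card]
  omega

end GraphInfra

section BipInfra

lemma bipGraph_adj {α β : Type*} (E : α → β → Prop) (x y : α ⊕ β) :
    (bipGraph E).Adj x y ↔ (∃ a b, E a b ∧ x = Sum.inl a ∧ y = Sum.inr b) ∨
      (∃ a b, E a b ∧ x = Sum.inr b ∧ y = Sum.inl a) := by
  show (∃ a b, _ ∧ _) ↔ _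
  constructor
  · rintro ⟨a, b, h, hc | hc⟩
    · exact Or.inl ⟨a, b, h, hc.1, hc.2⟩
    · exact Or.inr ⟨a, b, h, hc.1, hc.2⟩
  · rintro (⟨a, b, h, h1, h2⟩ | ⟨a, b, h, h1, h2⟩)
    · exact ⟨a, b, h, Or.inl ⟨h1, h2⟩⟩
    · exact ⟨a, b, h, Or.inr ⟨h1, h2⟩⟩

lemma bipGraph_adj_inl_inr {α β : Type*} (E : α → β → Prop) (a : α) (b : β) :
    (bipGraph E).Adj (Sum.inl a) (Sum.inr b) ↔ E a b := by
  rw [bipGraph_adj]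
  constructor
  · rintro (⟨a', b', h, h1, h2⟩ | ⟨a', b', h, h1, h2⟩) <;> simp_all
  · intro h; exact Or.inl ⟨a, b, h, rfl, rfl⟩

lemma bipGraph_adj_inr_inl {α β : Type*} (E : α → β → Prop) (a : α) (b : β) :
    (bipGraph E).Adj (Sum.inr b) (Sum.inl a) ↔ E a b := by
  rw [bipGraph_adj]
  constructor
  · rintro (⟨a', b', h, h1, h2⟩ | ⟨a', b', h, h1, h2⟩) <;> simp_all
  · intro h; exact Or.inr ⟨a, b, h, rfl, rfl⟩

lemma bipGraph_adj_inl_inl {α β : Type*} (E : α → β → Prop) (a a' : α) :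
    ¬ (bipGraph E).Adj (Sum.inl a) (Sum.inl a') := by
  rw [bipGraph_adj]
  rintro (⟨a'', b'', h, h1, h2⟩ | ⟨a'', b'', h, h1, h2⟩) <;> simp_all

lemma bipGraph_adj_inr_inr {α β : Type*} (E : α → β → Prop) (b b' : β) :
    ¬ (bipGraph E).Adj (Sum.inr b) (Sum.inr b') := by
  rw [bipGraph_adj]
  rintro (⟨a'', b'', h, h1, h2⟩ | ⟨a'', b'', h, h1, h2⟩) <;> simp_all

def bipIso {α β α' β' : Type*} {E : α → β → Prop} {E' : α' → β' → Prop}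
    (ea : α ≃ α') (eb : β ≃ β') (h : ∀ a b, E a b ↔ E' (ea a) (eb b)) :
    bipGraph E ≃g bipGraph E' where
  toEquiv := Equiv.sumCongr ea eb
  map_rel_iff' := by
    intro x y
    rcases x with a | b <;> rcases y with a2 | b2 <;>
      simp only [Equiv.sumCongr_apply, Sum.map_inl, Sum.map_inr, bipGraph_adj_inl_inr,
        bipGraph_adj_inr_inl, iff_false, bipGraph_adj_inl_inl, bipGraph_adj_inr_inr,
        not_false_iff, iff_true]
    · exact (h _ _).symm
    · exact (h _ _).symm

def bipFlip {α β : Type*} (E : α → β → Prop) : bipGraph E ≃g bipGraph (fun b a => E a b) where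
  toEquiv := Equiv.sumComm α β
  map_rel_iff' := by
    intro x y
    rcases x with a | b <;> rcases y with a2 | b2 <;>
      simp only [Equiv.sumComm_apply, Sum.swap_inl, Sum.swap_inr, bipGraph_adj_inl_inr,
        bipGraph_adj_inr_inl, iff_false, bipGraph_adj_inl_inl, bipGraph_adj_inr_inr,
        not_false_iff, iff_true]

noncomputable def bipEdgeEquiv {α β : Type*} (E : α → β → Prop) :
    {p : α × β // E p.1 p.2} ≃ (bipGraph E).edgeSet := by
  refine Equiv.ofBijective
    (fun q => ⟨s(Sum.inl q.1.1, Sum.inr q.1.2), (bipGraph_adj_inl_inr E _ _).mpr q.2⟩) ⟨?_, ?_⟩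
  · rintro ⟨⟨a, b⟩, h⟩ ⟨⟨a', b'⟩, h'⟩ heq
    have heq' : s(Sum.inl a, Sum.inr b) = s(Sum.inl a', Sum.inr b') := congrArg Subtype.val heq
    rw [Sym2.eq_iff] at heq'
    rcases heq' with ⟨h1, h2⟩ | ⟨h1, h2⟩ <;> simp_all
  · rintro ⟨e, he⟩
    induction e with
    | _ x y =>
      rw [mem_edgeSet, bipGraph_adj] at he
      rcases he with ⟨a, b, h, rfl, rfl⟩ | ⟨a, b, h, rfl, rfl⟩
      · exact ⟨⟨(a, b), h⟩, rfl⟩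
      · exact ⟨⟨(a, b), h⟩, by simp [Sym2.eq_swap]⟩

lemma bipEdgeCard {α β : Type*} (E : α → β → Prop) :
    Nat.card (bipGraph E).edgeSet = Nat.card {p : α × β // E p.1 p.2} :=
  (Nat.card_congr (bipEdgeEquiv E)).symm

def sumSplitEquiv {α β γ : Type*} (P : α → (β ⊕ γ) → Prop) :
    {p : α × (β ⊕ γ) // P p.1 p.2} ≃
      ({p : α × β // P p.1 (Sum.inl p.2)} ⊕ {p : α × γ // P p.1 (Sum.inr p.2)}) where
  toFun := fun x => match x with
    | ⟨(a, Sum.inl b), h⟩ => Sum.inl ⟨(a, b), h⟩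
    | ⟨(a, Sum.inr c), h⟩ => Sum.inr ⟨(a, c), h⟩
  invFun := Sum.elim (fun q => ⟨(q.1.1, Sum.inl q.1.2), q.2⟩) (fun q => ⟨(q.1.1, Sum.inr q.1.2), q.2⟩)
  left_inv := by rintro ⟨⟨a, b | c⟩, h⟩ <;> rfl
  right_inv := by rintro (⟨⟨a, b⟩, h⟩ | ⟨⟨a, c⟩, h⟩) <;> rfl

end BipInfra
section Core

variable {α β γ : Type*}

/-- relation for `T₁`: the old graph with the blown-up vertex as `Unit`. -/
def coreT1 (E₁ : α → β → Prop) (E₂ : α → γ → Prop) : α → (β ⊕ Unit) → Prop :=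
  fun a x => Sum.elim (E₁ a) (fun _ => ∃ c, E₂ a c) x

/-- relation for the glued graph. -/
def coreG (E₁ : α → β → Prop) (E₂ : α → γ → Prop) : α → (β ⊕ γ) → Prop :=
  fun a x => Sum.elim (E₁ a) (E₂ a) x

/-- relation for the auxiliary tree `S₂`. -/
def coreS2 (E₂ : α → γ → Prop) : {a : α // ∃ c, E₂ a c} → γ → Prop := fun a c => E₂ a.1 c

/-- the projection homomorphism from the glued graph to `T₁`. -/
def coreQ (E₁ : α → β → Prop) (E₂ : α → γ → Prop) :
    bipGraph (coreG E₁ E₂) →g bipGraph (coreT1 E₁ E₂) := by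
  refine ⟨Sum.map id (Sum.map id fun _ => ()), ?_⟩
  rintro x y ⟨a, r, hE, (⟨rfl, rfl⟩ | ⟨rfl, rfl⟩)⟩
  · rcases r with b | c
    · exact ⟨a, Sum.inl b, hE, Or.inl ⟨rfl, rfl⟩⟩
    · exact ⟨a, Sum.inr (), ⟨c, hE⟩, Or.inl ⟨rfl, rfl⟩⟩
  · rcases r with b | c
    · exact ⟨a, Sum.inl b, hE, Or.inr ⟨rfl, rfl⟩⟩
    · exact ⟨a, Sum.inr (), ⟨c, hE⟩, Or.inr ⟨rfl, rfl⟩⟩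

@[simp] lemma coreQ_inl (E₁ : α → β → Prop) (E₂ : α → γ → Prop) (a : α) :
    coreQ E₁ E₂ (Sum.inl a) = Sum.inl a := rfl
@[simp] lemma coreQ_inrl (E₁ : α → β → Prop) (E₂ : α → γ → Prop) (b : β) :
    coreQ E₁ E₂ (Sum.inr (Sum.inl b)) = Sum.inr (Sum.inl b) := rfl
@[simp] lemma coreQ_inrr (E₁ : α → β → Prop) (E₂ : α → γ → Prop) (c : γ) :
    coreQ E₁ E₂ (Sum.inr (Sum.inr c)) = Sum.inr (Sum.inr ()) := rfl

/-- the inclusion homomorphism from `S₂` to the glued graph. -/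
def corePsi (E₁ : α → β → Prop) (E₂ : α → γ → Prop) :
    bipGraph (coreS2 E₂) →g bipGraph (coreG E₁ E₂) := by
  refine ⟨Sum.map Subtype.val Sum.inr, ?_⟩
  rintro x y ⟨a, c, hE, (⟨rfl, rfl⟩ | ⟨rfl, rfl⟩)⟩
  · exact ⟨a.1, Sum.inr c, hE, Or.inl ⟨rfl, rfl⟩⟩
  · exact ⟨a.1, Sum.inr c, hE, Or.inr ⟨rfl, rfl⟩⟩

@[simp] lemma corePsi_inl (E₁ : α → β → Prop) (E₂ : α → γ → Prop) (a : {a : α // ∃ c, E₂ a c}) :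
    corePsi E₁ E₂ (Sum.inl a) = Sum.inl a.1 := rfl
@[simp] lemma corePsi_inr (E₁ : α → β → Prop) (E₂ : α → γ → Prop) (c : γ) :
    corePsi E₁ E₂ (Sum.inr c) = Sum.inr (Sum.inr c) := rfl

lemma core_isTree [Finite α] [Finite β] [Finite γ] (E₁ : α → β → Prop) (E₂ : α → γ → Prop)
    (h1 : (bipGraph (coreT1 E₁ E₂)).IsTree) (h2 : (bipGraph (coreS2 E₂)).IsTree) :
    (bipGraph (coreG E₁ E₂)).IsTree := by
  have hψ : ∀ x y, (bipGraph (coreG E₁ E₂)).Reachable (corePsi E₁ E₂ x) (corePsi E₁ E₂ y) :=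
    fun x y => (h2.isConnected.preconnected x y).map (corePsi E₁ E₂)
  have step : ∀ (x : α ⊕ (β ⊕ γ)) (m' : α ⊕ (β ⊕ Unit)),
      (bipGraph (coreT1 E₁ E₂)).Adj (coreQ E₁ E₂ x) m' →
      ∃ m, coreQ E₁ E₂ m = m' ∧ (bipGraph (coreG E₁ E₂)).Reachable x m := by
    intro x m' hadj
    rcases hadj with ⟨a, r, hE, (⟨hx, rfl⟩ | ⟨hx, rfl⟩)⟩
    · have hx' : x = Sum.inl a := by
        rcases x with a'' | (b'' | c'') <;> simp only [coreQ_inl, coreQ_inrl, coreQ_inrr] at hx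
        · rw [Sum.inl.injEq] at hx
          exact congrArg _ hx
        · exact absurd hx (by simp)
        · exact absurd hx (by simp)
      subst hx'
      rcases r with b | u
      · exact ⟨Sum.inr (Sum.inl b), rfl,
          Adj.reachable ⟨a, Sum.inl b, hE, Or.inl ⟨rfl, rfl⟩⟩⟩
      · obtain ⟨c, hc⟩ := hE
        exact ⟨Sum.inr (Sum.inr c), rfl,
          Adj.reachable ⟨a, Sum.inr c, hc, Or.inl ⟨rfl, rfl⟩⟩⟩
    · rcases r with b | u
      · have hx' : x = Sum.inr (Sum.inl b) := by
          rcases x with a'' | (b'' | c'') <;> simp only [coreQ_inl, coreQ_inrl, coreQ_inrr] at hx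
          · exact absurd hx (by simp)
          · rw [Sum.inr.injEq, Sum.inl.injEq] at hx
            exact congrArg _ (congrArg _ hx)
          · exact absurd hx (by simp)
        subst hx'
        exact ⟨Sum.inl a, rfl, Adj.reachable ⟨a, Sum.inl b, hE, Or.inr ⟨rfl, rfl⟩⟩⟩
      · obtain ⟨c'', hx'⟩ : ∃ c'', x = Sum.inr (Sum.inr c'') := by
          rcases x with a'' | (b'' | c'') <;> simp only [coreQ_inl, coreQ_inrl, coreQ_inrr] at hx
          · exact absurd hx (by simp)
          · exact absurd hx (by simp)
          · exact ⟨c'', rfl⟩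
        subst hx'
        exact ⟨Sum.inl a, rfl, hψ (Sum.inr c'') (Sum.inl ⟨a, hE⟩)⟩
  have key : ∀ {x' y' : α ⊕ (β ⊕ Unit)} (p : (bipGraph (coreT1 E₁ E₂)).Walk x' y')
      (x y : α ⊕ (β ⊕ γ)), coreQ E₁ E₂ x = x' → coreQ E₁ E₂ y = y' →
      (bipGraph (coreG E₁ E₂)).Reachable x y := by
    intro x' y' p
    induction p with
    | nil =>
      intro x y hx hy
      rw [← hy] at hx
      clear hy
      rcases x with a | (b | c) <;> rcases y with a2 | (b2 | c2) <;>
        simp only [coreQ_inl, coreQ_inrl, coreQ_inrr, Sum.inl.injEq, Sum.inr.injEq,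
          reduceCtorEq] at hx
      · exact hx ▸ Reachable.refl _
      · exact hx ▸ Reachable.refl _
      · exact hψ (Sum.inr c) (Sum.inr c2)
    | cons hadj p ih =>
      intro x y hx hy
      subst hx
      obtain ⟨m, hm, hr⟩ := step x _ hadj
      exact hr.trans (ih m y hm hy)
  have hconn : (bipGraph (coreG E₁ E₂)).Connected := by
    have hne : Nonempty (α ⊕ (β ⊕ γ)) := by
      obtain ⟨z⟩ := h2.isConnected.nonempty
      exact ⟨corePsi E₁ E₂ z⟩
    refine Connected.mk ?_
    intro x y
    exact (h1.isConnected.preconnected (coreQ E₁ E₂ x) (coreQ E₁ E₂ y)).elim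
      fun p => key p x y rfl rfl
  have e1 : Nat.card {p : α × (β ⊕ Unit) // coreT1 E₁ E₂ p.1 p.2} =
      Nat.card {p : α × β // E₁ p.1 p.2} + Nat.card {a : α // ∃ c, E₂ a c} := by
    rw [Nat.card_congr (sumSplitEquiv (coreT1 E₁ E₂)), Nat.card_sum]
    congr 1
    exact Nat.card_congr ⟨fun x => ⟨x.1.1, x.2⟩, fun x => ⟨(x.1, ()), x.2⟩,
      fun ⟨⟨a, ⟨⟩⟩, h⟩ => rfl, fun ⟨a, h⟩ => rfl⟩
  have e2 : Nat.card {p : {a : α // ∃ c, E₂ a c} × γ // coreS2 E₂ p.1 p.2} =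
      Nat.card {p : α × γ // E₂ p.1 p.2} := by
    exact Nat.card_congr ⟨fun x => ⟨(x.1.1.1, x.1.2), x.2⟩,
      fun x => ⟨(⟨x.1.1, ⟨x.1.2, x.2⟩⟩, x.1.2), x.2⟩,
      fun ⟨⟨⟨a, h⟩, c⟩, hE⟩ => rfl, fun ⟨⟨a, c⟩, hE⟩ => rfl⟩
  have e3 : Nat.card {p : α × (β ⊕ γ) // coreG E₁ E₂ p.1 p.2} =
      Nat.card {p : α × β // E₁ p.1 p.2} + Nat.card {p : α × γ // E₂ p.1 p.2} := by
    rw [Nat.card_congr (sumSplitEquiv (coreG E₁ E₂)), Nat.card_sum]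
    rfl
  have c1 := tsIsTree_nat_card h1
  have c2 := tsIsTree_nat_card h2
  rw [bipEdgeCard, e1, Nat.card_sum, Nat.card_sum] at c1
  rw [bipEdgeCard, e2, Nat.card_sum] at c2
  refine tsIsTree_of_card hconn ?_
  rw [bipEdgeCard, e3, Nat.card_sum, Nat.card_sum]
  have hu : Nat.card Unit = 1 := Nat.card_unique
  omega

end Core
section Words

variable {F : Set (List A)}

lemma tsFac_prefix (hF : Factorial F) {x y : List A} (hx : x ∈ F) (h : y <+: x) : y ∈ F :=
  hF hx h.isInfix

lemma tsFac_suffix (hF : Factorial F) {x y : List A} (hx : x ∈ F) (h : y <:+ x) : y ∈ F :=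
  hF hx h.isInfix

lemma tsBiess_right (hB : Biessential F) {x : List A} (hx : x ∈ F) : ∃ b, x ++ [b] ∈ F := by
  obtain ⟨a, b, h⟩ := hB.2 x hx
  exact ⟨b, tsFac_suffix hB.1 h (List.suffix_cons a _)⟩

lemma tsBiess_left (hB : Biessential F) {x : List A} (hx : x ∈ F) : ∃ a, [a] ++ x ∈ F := by
  obtain ⟨a, b, h⟩ := hB.2 x hx
  refine ⟨a, tsFac_prefix hB.1 h ?_⟩
  show a :: x <+: a :: (x ++ [b])
  exact ⟨[b], by simp⟩

/-- the set of one-letter words of `F`. -/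
def letterSet (F : Set (List A)) : Set (List A) := {x | ∃ a : A, x = [a] ∧ x ∈ F}

lemma letterSet_mem {a : A} (h : [a] ∈ F) : [a] ∈ letterSet F := ⟨a, rfl, h⟩

lemma head_singleton_prefix {l : List A} (h : l ≠ []) : [l.head h] <+: l :=
  ⟨l.tail, by simp⟩

lemma getLast_singleton_suffix {l : List A} (h : l ≠ []) : [l.getLast h] <:+ l :=
  ⟨l.dropLast, List.dropLast_append_getLast h⟩

lemma letterSet_maxPrefixCode (hF : Factorial F) :
    IsMaximalPrefixCodeIn F (letterSet F) := by
  refine ⟨⟨fun u hu => by obtain ⟨a, rfl, -⟩ := hu; simp,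
    fun u hu v hv h => ?_⟩, fun u hu => by obtain ⟨a, rfl, h⟩ := hu; exact h, ?_⟩
  · obtain ⟨a, rfl, -⟩ := hu; obtain ⟨b, rfl, -⟩ := hv
    exact h.eq_of_length rfl
  · intro W hW hWF hsub
    refine Set.Subset.antisymm hsub (fun x hx => ?_)
    have hxne := hW.1 x hx
    have h1 : [x.head hxne] ∈ F := tsFac_prefix hF (hWF hx) (head_singleton_prefix hxne)
    have h2 := hW.2 _ (hsub (letterSet_mem h1)) x hx (head_singleton_prefix hxne)
    rw [← h2]
    exact letterSet_mem h1

lemma letterSet_maxSuffixCode (hF : Factorial F) :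
    IsMaximalSuffixCodeIn F (letterSet F) := by
  refine ⟨⟨fun u hu => by obtain ⟨a, rfl, -⟩ := hu; simp,
    fun u hu v hv h => ?_⟩, fun u hu => by obtain ⟨a, rfl, h⟩ := hu; exact h, ?_⟩
  · obtain ⟨a, rfl, -⟩ := hu; obtain ⟨b, rfl, -⟩ := hv
    exact h.eq_of_length rfl
  · intro W hW hWF hsub
    refine Set.Subset.antisymm hsub (fun x hx => ?_)
    have hxne := hW.1 x hx
    have h1 : [x.getLast hxne] ∈ F := tsFac_suffix hF (hWF hx) (getLast_singleton_suffix hxne)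
    have h2 := hW.2 _ (hsub (letterSet_mem h1)) x hx (getLast_singleton_suffix hxne)
    rw [← h2]
    exact letterSet_mem h1

/-- existence of a finite maximal prefix code forces finitely many letters. -/
lemma letterSet_finite {V : Set (List A)} (hVfin : V.Finite)
    (hV : IsMaximalPrefixCodeIn F V) : (letterSet F).Finite := by
  have key : ∀ x ∈ letterSet F, ∃ v ∈ V, ∃ hv : v ≠ [], x = [v.head hv] := by
    rintro x ⟨a, rfl, haF⟩
    by_cases haV : [a] ∈ V
    · exact ⟨[a], haV, by simp, rfl⟩
    · have : ∃ v ∈ V, [a] <+: v := by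
        by_contra hno
        push_neg at hno
        have hW : IsPrefixCode (insert [a] V) := by
          refine ⟨?_, ?_⟩
          · rintro u (rfl | hu)
            · simp
            · exact hV.1.1 u hu
          · rintro u (rfl | hu) v (rfl | hv) h
            · rfl
            · exact absurd h (hno v hv)
            · have := hV.1.1 u hu
              have hlen : u.length = 1 := by
                have := h.length_le
                simp at this
                have : u.length = 0 ∨ u.length = 1 := by omega
                rcases this with h0 | h1
                · exact absurd (List.length_eq_zero_iff.mp h0) (hV.1.1 u hu)
                · exact h1
              have := h.eq_of_length (by simp [hlen])
              exact absurd (this ▸ hu) haV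
            · exact hV.1.2 u hu v hv h
        have := hV.2.2 _ hW (by rintro u (rfl | hu); exacts [haF, hV.2.1 hu])
          (Set.subset_insert _ _)
        exact haV (this ▸ Set.mem_insert _ _)
      obtain ⟨v, hvV, t, rfl⟩ := this
      exact ⟨[a] ++ t, hvV, by simp, rfl⟩
  have : letterSet F ⊆ (fun v => v.take 1) '' V := by
    intro x hx
    obtain ⟨v, hvV, hv, hx'⟩ := key x hx
    refine ⟨v, hvV, ?_⟩
    obtain ⟨b, tl, rfl⟩ := List.exists_cons_of_ne_nil hv
    simp [hx']
  exact Set.Finite.subset (hVfin.image _) this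

/-- a maximal suffix code whose words are letters is the letter set. -/
lemma suffixCode_eq_letterSet {U : Set (List A)} (hF : Factorial F)
    (hU : IsMaximalSuffixCodeIn F U) (hshort : ∀ u ∈ U, u.length ≤ 1) :
    U = letterSet F := by
  have hsub : U ⊆ letterSet F := by
    intro u hu
    have hne := hU.1.1 u hu
    have : u.length = 1 := by
      have := hshort u hu
      have : u.length ≠ 0 := fun h => hne (List.length_eq_zero_iff.mp h)
      omega
    obtain ⟨a, rfl⟩ := List.length_eq_one_iff.mp this
    exact ⟨a, rfl, hU.2.1 hu⟩
  have hmax := letterSet_maxSuffixCode (F := F) hF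
  exact (hU.2.2 _ hmax.1 hmax.2.1 hsub)

lemma prefixCode_eq_letterSet {V : Set (List A)} (hF : Factorial F)
    (hV : IsMaximalPrefixCodeIn F V) (hshort : ∀ v ∈ V, v.length ≤ 1) :
    V = letterSet F := by
  have hsub : V ⊆ letterSet F := by
    intro u hu
    have hne := hV.1.1 u hu
    have : u.length = 1 := by
      have := hshort u hu
      have : u.length ≠ 0 := fun h => hne (List.length_eq_zero_iff.mp h)
      omega
    obtain ⟨a, rfl⟩ := List.length_eq_one_iff.mp this
    exact ⟨a, rfl, hV.2.1 hu⟩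
  have hmax := letterSet_maxPrefixCode (F := F) hF
  exact (hV.2.2 _ hmax.1 hmax.2.1 hsub)

/-- finiteness of the vertex subtypes. -/
lemma finite_vertexSub {S : Set (List A)} (h : S.Finite) (P : List A → Prop) :
    Finite {l : List A // l ∈ S ∧ P l} := by
  have := h.to_subtype
  exact Finite.of_injective (fun x => (⟨x.1, x.2.1⟩ : S)) (by
    rintro ⟨x, hx⟩ ⟨y, hy⟩ h
    simpa using congrArg Subtype.val h)

/-- the base case: both codes are the letter set. -/
lemma base_isTree (hF : IsTreeSet F) {w : List A} (hw : w ∈ F) :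
    (genExtGraph F (letterSet F) (letterSet F) w).IsTree := by
  refine tsIso_isTree (H := genExtGraph F (letterSet F) (letterSet F) w) ?_ (hF.2 w hw)
  have hFac : Factorial F := hF.1.1
  refine bipIso (E := fun (a : {a : A // a ∈ LeftExt F w}) (b : {b : A // b ∈ RightExt F w}) =>
      a.1 :: (w ++ [b.1]) ∈ F)
    (Equiv.ofBijective (fun a => ⟨[a.1], letterSet_mem (tsFac_prefix hFac a.2 ⟨w, rfl⟩), a.2⟩)
      ⟨?_, ?_⟩)
    (Equiv.ofBijective (fun b => ⟨[b.1], letterSet_mem (tsFac_suffix hFac b.2 (List.suffix_append w _)), b.2⟩)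
      ⟨?_, ?_⟩) ?_
  · rintro ⟨a, ha⟩ ⟨a', ha'⟩ h
    simpa using congrArg Subtype.val h
  · rintro ⟨l, ⟨a, rfl, haF⟩, hlw⟩
    exact ⟨⟨a, hlw⟩, rfl⟩
  · rintro ⟨b, hb⟩ ⟨b', hb'⟩ h
    simpa using congrArg Subtype.val h
  · rintro ⟨r, ⟨b, rfl, hbF⟩, hwr⟩
    exact ⟨⟨b, hwr⟩, rfl⟩
  · intro a b
    show a.1 :: (w ++ [b.1]) ∈ F ↔ [a.1] ++ w ++ [b.1] ∈ F
    simp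

end Words
section RightRed

variable {F V : Set (List A)} {v' : List A} {a0 : A}

lemma rr_not_mem (hV : IsMaximalPrefixCodeIn F V) (hvV : v' ++ [a0] ∈ V) : v' ∉ V := by
  intro h
  have := hV.1.2 v' h _ hvV (List.prefix_append _ _)
  simpa using congrArg List.length this

lemma rr_complete (hFac : Factorial F) (hV : IsMaximalPrefixCodeIn F V)
    (hvV : v' ++ [a0] ∈ V) (hmax : ∀ x ∈ V, x.length ≤ v'.length + 1)
    {b : A} (hb : v' ++ [b] ∈ F) : v' ++ [b] ∈ V := by
  have hW : IsPrefixCode (insert (v' ++ [b]) V) := by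
    constructor
    · rintro u (rfl | hu)
      · simp
      · exact hV.1.1 u hu
    · rintro u (rfl | hu) x (rfl | hx) h
      · rfl
      · refine (h.eq_of_length ?_)
        have h1 := h.length_le
        have h2 := hmax x hx
        simp only [List.length_append, List.length_singleton] at *
        omega
      · by_cases hlen : u.length = v'.length + 1
        · exact h.eq_of_length (by simpa using hlen)
        · have hle : u.length ≤ v'.length := by
            have := h.length_le
            simp only [List.length_append, List.length_singleton] at this
            omega
          have hu' : u <+: v' := List.prefix_of_prefix_length_le h (List.prefix_append _ _) hle
          have := hV.1.2 u hu _ hvV (hu'.trans (List.prefix_append _ _))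
          rw [this] at hle
          simp at hle
      · exact hV.1.2 u hu x hx h
  have := hV.2.2 _ hW (by rintro u (rfl | hu); exacts [hb, hV.2.1 hu]) (Set.subset_insert _ _)
  exact this ▸ Set.mem_insert _ _

lemma rr_form (hFac : Factorial F) (hV : IsMaximalPrefixCodeIn F V)
    (hvV : v' ++ [a0] ∈ V) (hmax : ∀ x ∈ V, x.length ≤ v'.length + 1)
    {x : List A} (hx : x ∈ V) (hpre : v' <+: x) : ∃ b, x = v' ++ [b] := by
  obtain ⟨t, rfl⟩ := hpre
  rcases t with _ | ⟨b, t'⟩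
  · rw [List.append_nil] at hx
    exact absurd hx (rr_not_mem hV hvV)
  · have hz : v' ++ [b] <+: v' ++ (b :: t') := ⟨t', by simp⟩
    have hzF : v' ++ [b] ∈ F := tsFac_prefix hFac (hV.2.1 hx) hz
    have hzV := rr_complete hFac hV hvV hmax hzF
    have := hV.1.2 _ hzV _ hx hz
    exact ⟨b, this.symm⟩

/-- the reduced prefix code. -/
def rrV' (V : Set (List A)) (v' : List A) : Set (List A) := insert v' {x ∈ V | ¬ v' <+: x}

lemma rr_V'_max (hFac : Factorial F) (hV : IsMaximalPrefixCodeIn F V)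
    (hvV : v' ++ [a0] ∈ V) (hmax : ∀ x ∈ V, x.length ≤ v'.length + 1)
    (hv' : v' ≠ []) : IsMaximalPrefixCodeIn F (rrV' V v') := by
  have hcode : IsPrefixCode (rrV' V v') := by
    constructor
    · rintro u (rfl | ⟨hu, -⟩)
      · exact hv'
      · exact hV.1.1 u hu
    · rintro u (rfl | ⟨hu, hnu⟩) x (rfl | ⟨hx, hnx⟩) h
      · rfl
      · exact absurd h hnx
      · have := hV.1.2 u hu _ hvV (h.trans (List.prefix_append _ _))
        rw [this] at h ⊢
        have := h.length_le
        simp at this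
      · exact hV.1.2 u hu x hx h
  refine ⟨hcode, ?_, ?_⟩
  · rintro u (rfl | ⟨hu, -⟩)
    · exact tsFac_prefix hFac (hV.2.1 hvV) (List.prefix_append _ _)
    · exact hV.2.1 hu
  · intro W hW hWF hsub
    refine Set.Subset.antisymm hsub (fun x hx => ?_)
    by_cases hpre : v' <+: x
    · have : v' = x := hW.2 v' (hsub (Set.mem_insert _ _)) x hx hpre
      rw [← this]
      exact Set.mem_insert _ _
    · have hxV : x ∈ V := by
        have hW'' : IsPrefixCode (insert x V) := by
          constructor
          · rintro u (rfl | hu)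
            · exact hW.1 _ hx
            · exact hV.1.1 u hu
          · rintro u (rfl | hu) y (rfl | hy) h
            · rfl
            · -- x <+: y, y ∈ V
              by_cases hpy : v' <+: y
              · obtain ⟨b, rfl⟩ := rr_form hFac hV hvV hmax hy hpy
                by_cases hlen : u.length = v'.length + 1
                · exact h.eq_of_length (by simpa using hlen)
                · have hle : u.length ≤ v'.length := by
                    have := h.length_le
                    simp only [List.length_append, List.length_singleton] at this
                    omega
                  have hxv' : u <+: v' :=
                    List.prefix_of_prefix_length_le h (List.prefix_append _ _) hle
                  have := hW.2 u hx v' (hsub (Set.mem_insert _ _)) hxv'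
                  exact absurd (this ▸ List.prefix_refl v') hpre
              · exact hW.2 u hx y (hsub (Or.inr ⟨hy, hpy⟩)) h
            · -- u ∈ V, u <+: x
              by_cases hpu : v' <+: u
              · exact absurd (hpu.trans h) hpre
              · exact hW.2 u (hsub (Or.inr ⟨hu, hpu⟩)) y hx h
            · exact hV.1.2 u hu y hy h
        have := hV.2.2 _ hW'' (by rintro u (rfl | hu); exacts [hWF hx, hV.2.1 hu])
          (Set.subset_insert _ _)
        exact this ▸ Set.mem_insert _ _
      exact Or.inr ⟨hxV, hpre⟩

lemma rr_V'_subset_F (hFac : Factorial F) (hV : IsMaximalPrefixCodeIn F V)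
    (hvV : v' ++ [a0] ∈ V) : rrV' V v' ⊆ F := by
  rintro u (rfl | ⟨hu, -⟩)
  · exact tsFac_prefix hFac (hV.2.1 hvV) (List.prefix_append _ _)
  · exact hV.2.1 hu

lemma rr_V'_finite (v' : List A) (hVfin : V.Finite) : (rrV' V v').Finite :=
  (hVfin.subset (Set.sep_subset _ _)).insert v'

/-- the length measure of a finite set of words. -/
noncomputable def tsM (S : Set (List A)) (h : S.Finite) : ℕ :=
  h.toFinset.sum (fun x => x.length - 1)

lemma rr_measure (hV : IsMaximalPrefixCodeIn F V) (hVfin : V.Finite)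
    (hvV : v' ++ [a0] ∈ V) (hv' : v' ≠ []) :
    tsM (rrV' V v') (rr_V'_finite v' hVfin) < tsM V hVfin := by
  classical
  have hv'len : 1 ≤ v'.length := by
    rcases v' with _ | _
    · exact absurd rfl hv'
    · simp
  have hvmem : v' ++ [a0] ∈ hVfin.toFinset := hVfin.mem_toFinset.mpr hvV
  have hsub : (rr_V'_finite v' hVfin).toFinset ⊆
      insert v' (hVfin.toFinset.erase (v' ++ [a0])) := by
    intro x hx
    rw [Set.Finite.mem_toFinset] at hx
    rcases hx with rfl | ⟨hx, hnx⟩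
    · exact Finset.mem_insert_self _ _
    · refine Finset.mem_insert_of_mem (Finset.mem_erase.mpr ⟨?_, hVfin.mem_toFinset.mpr hx⟩)
      rintro rfl
      exact hnx (List.prefix_append _ _)
  have hnm : v' ∉ hVfin.toFinset.erase (v' ++ [a0]) := by
    intro h
    exact rr_not_mem hV hvV (hVfin.mem_toFinset.mp (Finset.mem_of_mem_erase h))
  have h1 : tsM (rrV' V v') (rr_V'_finite v' hVfin) ≤
      (v'.length - 1) + ∑ x ∈ hVfin.toFinset.erase (v' ++ [a0]), (x.length - 1) := by
    calc tsM (rrV' V v') (rr_V'_finite v' hVfin)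
        ≤ ∑ x ∈ insert v' (hVfin.toFinset.erase (v' ++ [a0])), (x.length - 1) :=
          Finset.sum_le_sum_of_subset hsub
      _ = _ := Finset.sum_insert hnm
  have h2 := Finset.add_sum_erase hVfin.toFinset (fun x => x.length - 1) hvmem
  simp only [List.length_append, List.length_singleton] at h2
  unfold tsM at h1 ⊢
  omega

end RightRed
section RightGraph

variable {F U V : Set (List A)} {v' : List A} {a0 : A} {w : List A}

lemma finite_sub' {S : Set (List A)} (h : S.Finite) (P : List A → Prop)
    (hP : ∀ l, P l → l ∈ S) : Finite {l : List A // P l} := by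
  have := h.to_subtype
  exact Finite.of_injective (fun x => (⟨x.1, hP _ x.2⟩ : S)) (by
    rintro ⟨x, hx⟩ ⟨y, hy⟩ hh
    simpa using congrArg Subtype.val hh)

lemma finite_letter (hletters : (letterSet F).Finite) (P : A → Prop)
    (hP : ∀ b, P b → [b] ∈ F) : Finite {b : A // P b} := by
  have := hletters.to_subtype
  exact Finite.of_injective
    (fun c => (⟨[c.1], letterSet_mem (hP _ c.2)⟩ : letterSet F)) (by
      rintro ⟨x, hx⟩ ⟨y, hy⟩ hh
      simpa using congrArg Subtype.val hh)

/-- abstract transfer between bipartite graphs. -/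
lemma bip_isTree_transfer {α β α' β' : Type*} {E : α → β → Prop} {E' : α' → β' → Prop}
    (ea : α ≃ α') (eb : β ≃ β') (h : ∀ a b, E a b ↔ E' (ea a) (eb b))
    (ht : (bipGraph E).IsTree) : (bipGraph E').IsTree :=
  tsIso_isTree (bipIso ea eb h) ht

lemma bip_isTree_transfer' {α β α' β' : Type*} {E : α → β → Prop} {E' : α' → β' → Prop}
    (ea : α' ≃ α) (eb : β' ≃ β) (h : ∀ a b, E' a b ↔ E (ea a) (eb b))
    (ht : (bipGraph E).IsTree) : (bipGraph E').IsTree :=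
  tsIso_isTree (SimpleGraph.Iso.symm (bipIso ea eb h)) ht

/-- left-to-old-right relation. -/
def rrE1 (F U V : Set (List A)) (v' w : List A) :
    {l : List A // l ∈ U ∧ l ++ w ∈ F} →
    {r : List A // (r ∈ V ∧ ¬ v' <+: r) ∧ w ++ r ∈ F} → Prop :=
  fun l r => l.1 ++ w ++ r.1 ∈ F

/-- left-to-new-right relation. -/
def rrE2 (F U : Set (List A)) (v' w : List A) :
    {l : List A // l ∈ U ∧ l ++ w ∈ F} → {b : A // (w ++ v') ++ [b] ∈ F} → Prop :=
  fun l c => l.1 ++ (w ++ v') ++ [c.1] ∈ F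

lemma rr_Niff (hFac : Factorial F) (hB : Biessential F)
    (l : {l : List A // l ∈ U ∧ l ++ w ∈ F}) :
    (∃ c : {b : A // (w ++ v') ++ [b] ∈ F}, rrE2 F U v' w l c) ↔ l.1 ++ w ++ v' ∈ F := by
  constructor
  · rintro ⟨c, hc⟩
    have : l.1 ++ (w ++ v') ∈ F := tsFac_prefix hFac hc (List.prefix_append _ _)
    rwa [← List.append_assoc] at this
  · intro h
    obtain ⟨b, hb⟩ := tsBiess_right hB h
    have hγ : (w ++ v') ++ [b] ∈ F := by
      refine tsFac_suffix hFac (x := l.1 ++ ((w ++ v') ++ [b])) ?_ (List.suffix_append _ _)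
      simpa [List.append_assoc] using hb
    exact ⟨⟨b, hγ⟩, by simpa [rrE2, List.append_assoc] using hb⟩

/-- vertex map for the `T₁` identification. -/
def rrF1 (hwv : w ++ v' ∈ F) :
    ({r : List A // (r ∈ V ∧ ¬ v' <+: r) ∧ w ++ r ∈ F} ⊕ Unit) →
    {r : List A // r ∈ rrV' V v' ∧ w ++ r ∈ F} :=
  fun x => Sum.elim
    (fun b => ⟨b.1, Set.mem_insert_iff.mpr (Or.inr ⟨b.2.1.1, b.2.1.2⟩), b.2.2⟩)
    (fun _ => ⟨v', Set.mem_insert _ _, hwv⟩) x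

lemma rrF1_bij (hwv : w ++ v' ∈ F) : Function.Bijective (rrF1 (V := V) hwv) := by
  constructor
  · rintro (b | ⟨⟩) (b' | ⟨⟩) h <;>
      simp only [rrF1, Sum.elim_inl, Sum.elim_inr, Subtype.mk.injEq] at h
    · exact congrArg Sum.inl (Subtype.ext h)
    · exact absurd (show v' <+: b.1 by rw [h]) b.2.1.2
    · exact absurd (show v' <+: b'.1 by rw [← h]) b'.2.1.2
    · rfl
  · rintro ⟨r, hr, hwr⟩
    rcases Set.mem_insert_iff.mp hr with rfl | ⟨hrV, hnp⟩
    · exact ⟨Sum.inr (), Subtype.ext rfl⟩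
    · exact ⟨Sum.inl ⟨r, ⟨hrV, hnp⟩, hwr⟩, Subtype.ext rfl⟩

/-- vertex map for the `S₂` left identification. -/
def rrFa2 (hFac : Factorial F) (hB : Biessential F) :
    {a : {l : List A // l ∈ U ∧ l ++ w ∈ F} // ∃ c, rrE2 F U v' w a c} →
    {l : List A // l ∈ U ∧ l ++ (w ++ v') ∈ F} :=
  fun x => ⟨x.1.1, x.1.2.1, by
    have := (rr_Niff hFac hB x.1).mp x.2
    rwa [List.append_assoc] at this⟩

lemma rrFa2_bij (hFac : Factorial F) (hB : Biessential F) :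
    Function.Bijective (rrFa2 (U := U) (v' := v') (w := w) hFac hB) := by
  constructor
  · rintro ⟨⟨l, hl⟩, hex⟩ ⟨⟨l', hl'⟩, hex'⟩ h
    simp only [rrFa2, Subtype.mk.injEq] at h
    exact Subtype.ext (Subtype.ext h)
  · rintro ⟨l, hlU, hlwv⟩
    have hlw : l ++ w ∈ F := by
      refine tsFac_prefix hFac hlwv ?_
      rw [← List.append_assoc]
      exact List.prefix_append _ _
    have hex : ∃ c, rrE2 F U v' w ⟨l, hlU, hlw⟩ c := by
      rw [rr_Niff hFac hB, List.append_assoc]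
      exact hlwv
    exact ⟨⟨⟨l, hlU, hlw⟩, hex⟩, Subtype.ext rfl⟩

/-- vertex map for the `S₂` right identification. -/
def rrFb2 (hFac : Factorial F) :
    {b : A // (w ++ v') ++ [b] ∈ F} →
    {r : List A // r ∈ letterSet F ∧ (w ++ v') ++ r ∈ F} :=
  fun c => ⟨[c.1], letterSet_mem (tsFac_suffix hFac c.2 (List.suffix_append _ _)), c.2⟩

lemma rrFb2_bij (hFac : Factorial F) :
    Function.Bijective (rrFb2 (v' := v') (w := w) hFac) := by
  constructor
  · rintro ⟨b, hb⟩ ⟨b', hb'⟩ h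
    simp only [rrFb2, Subtype.mk.injEq, List.cons.injEq, and_true] at h
    exact Subtype.ext h
  · rintro ⟨r, ⟨b, rfl, hbF⟩, hwr⟩
    exact ⟨⟨b, hwr⟩, Subtype.ext rfl⟩

/-- vertex map for the final identification. -/
def rrF3 (hFac : Factorial F) (hV : IsMaximalPrefixCodeIn F V)
    (hvV : v' ++ [a0] ∈ V) (hmax : ∀ x ∈ V, x.length ≤ v'.length + 1) :
    ({r : List A // (r ∈ V ∧ ¬ v' <+: r) ∧ w ++ r ∈ F} ⊕ {b : A // (w ++ v') ++ [b] ∈ F}) →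
    {r : List A // r ∈ V ∧ w ++ r ∈ F} :=
  fun x => Sum.elim
    (fun b => ⟨b.1, b.2.1.1, b.2.2⟩)
    (fun c => ⟨v' ++ [c.1],
      rr_complete hFac hV hvV hmax (tsFac_suffix hFac (x := w ++ (v' ++ [c.1]))
        (by simpa [List.append_assoc] using c.2) (List.suffix_append _ _)),
      by simpa [List.append_assoc] using c.2⟩) x

lemma rrF3_bij (hFac : Factorial F) (hV : IsMaximalPrefixCodeIn F V)
    (hvV : v' ++ [a0] ∈ V) (hmax : ∀ x ∈ V, x.length ≤ v'.length + 1) :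
    Function.Bijective (rrF3 (w := w) hFac hV hvV hmax) := by
  constructor
  · rintro (b | c) (b' | c') h <;>
      simp only [rrF3, Sum.elim_inl, Sum.elim_inr, Subtype.mk.injEq] at h
    · exact congrArg Sum.inl (Subtype.ext h)
    · exact absurd (show v' <+: b.1 by rw [h]; exact List.prefix_append _ _) b.2.1.2
    · exact absurd (show v' <+: b'.1 by rw [← h]; exact List.prefix_append _ _) b'.2.1.2
    · have := List.append_cancel_left h
      simp only [List.cons.injEq, and_true] at this
      exact congrArg Sum.inr (Subtype.ext this)
  · rintro ⟨r, hrV, hwr⟩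
    by_cases hpre : v' <+: r
    · obtain ⟨b, rfl⟩ := rr_form hFac hV hvV hmax hrV hpre
      exact ⟨Sum.inr ⟨b, by simpa [List.append_assoc] using hwr⟩, Subtype.ext rfl⟩
    · exact ⟨Sum.inl ⟨r, ⟨hrV, hpre⟩, hwr⟩, Subtype.ext rfl⟩

/-- vertex map for the degenerate case. -/
def rrFdeg (hnwv : w ++ v' ∉ F) :
    {r : List A // r ∈ rrV' V v' ∧ w ++ r ∈ F} → {r : List A // r ∈ V ∧ w ++ r ∈ F} :=
  fun x => ⟨x.1, (Set.mem_insert_iff.mp x.2.1).resolve_left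
    (fun heq => hnwv (heq ▸ x.2.2)) |>.1, x.2.2⟩

lemma rrFdeg_bij (hFac : Factorial F) (hnwv : w ++ v' ∉ F) :
    Function.Bijective (rrFdeg (V := V) hnwv) := by
  constructor
  · rintro ⟨x, hx⟩ ⟨y, hy⟩ h
    simp only [rrFdeg, Subtype.mk.injEq] at h
    exact Subtype.ext h
  · rintro ⟨r, hrV, hwr⟩
    refine ⟨⟨r, Set.mem_insert_iff.mpr (Or.inr ⟨hrV, ?_⟩), hwr⟩, rfl⟩
    rintro ⟨t, rfl⟩
    exact hnwv (tsFac_prefix hFac hwr ⟨t, by simp⟩)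

lemma rr_isTree (hF : IsTreeSet F) (hw : w ∈ F)
    (hUfin : U.Finite) (hVfin : V.Finite)
    (hV : IsMaximalPrefixCodeIn F V)
    (hletters : (letterSet F).Finite)
    (hvV : v' ++ [a0] ∈ V) (hmax : ∀ x ∈ V, x.length ≤ v'.length + 1) (hv' : v' ≠ [])
    (hT1 : (genExtGraph F U (rrV' V v') w).IsTree)
    (hS2 : ∀ w' ∈ F, (genExtGraph F U (letterSet F) w').IsTree) :
    (genExtGraph F U V w).IsTree := by
  have hFac : Factorial F := hF.1.1
  have hB : Biessential F := hF.1
  by_cases hwv : w ++ v' ∈ F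
  · -- main case: glue
    haveI : Finite {l : List A // l ∈ U ∧ l ++ w ∈ F} :=
      finite_sub' hUfin _ (fun l h => h.1)
    haveI : Finite {r : List A // (r ∈ V ∧ ¬ v' <+: r) ∧ w ++ r ∈ F} :=
      finite_sub' hVfin _ (fun l h => h.1.1)
    haveI : Finite {b : A // (w ++ v') ++ [b] ∈ F} :=
      finite_letter hletters _ (fun b hb => tsFac_suffix hFac hb (List.suffix_append _ _))
    have h1 : (bipGraph (coreT1 (rrE1 F U V v' w) (rrE2 F U v' w))).IsTree := by
      refine bip_isTree_transfer' (Equiv.refl _)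
        (Equiv.ofBijective (rrF1 hwv) (rrF1_bij hwv)) ?_ hT1
      rintro a (b | ⟨⟩)
      · exact Iff.rfl
      · exact rr_Niff hFac hB a
    have h2 : (bipGraph (coreS2 (rrE2 F U v' w))).IsTree := by
      refine bip_isTree_transfer' (Equiv.ofBijective (rrFa2 hFac hB) (rrFa2_bij hFac hB))
        (Equiv.ofBijective (rrFb2 hFac) (rrFb2_bij hFac)) ?_ (hS2 (w ++ v') hwv)
      intro a c
      exact Iff.rfl
    refine bip_isTree_transfer (Equiv.refl _)
      (Equiv.ofBijective (rrF3 hFac hV hvV hmax) (rrF3_bij hFac hV hvV hmax)) ?_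
      (core_isTree (rrE1 F U V v' w) (rrE2 F U v' w) h1 h2)
    rintro a (b | c)
    · exact Iff.rfl
    · show rrE2 F U v' w a c ↔ a.1 ++ w ++ (v' ++ [c.1]) ∈ F
      constructor
      · intro h; simpa [rrE2, List.append_assoc] using h
      · intro h; simpa [rrE2, List.append_assoc] using h
  · -- degenerate case: the graphs are isomorphic
    refine bip_isTree_transfer (Equiv.refl _)
      (Equiv.ofBijective (rrFdeg hwv) (rrFdeg_bij hFac hwv)) ?_ hT1
    intro l r
    exact Iff.rfl

end RightGraph
section LeftRed

variable {F U V : Set (List A)} {u' : List A} {c0 : A} {w : List A}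

lemma lr_not_mem (hU : IsMaximalSuffixCodeIn F U) (hvU : [c0] ++ u' ∈ U) : u' ∉ U := by
  intro h
  have := hU.1.2 u' h _ hvU (List.suffix_append _ _)
  simpa using congrArg List.length this

lemma lr_complete (hFac : Factorial F) (hU : IsMaximalSuffixCodeIn F U)
    (hvU : [c0] ++ u' ∈ U) (hmax : ∀ x ∈ U, x.length ≤ u'.length + 1)
    {c : A} (hc : [c] ++ u' ∈ F) : [c] ++ u' ∈ U := by
  have hW : IsSuffixCode (insert ([c] ++ u') U) := by
    constructor
    · rintro x (rfl | hx)
      · simp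
      · exact hU.1.1 x hx
    · rintro x (rfl | hx) y (rfl | hy) h
      · rfl
      · refine (h.eq_of_length ?_)
        have h1 := h.length_le
        have h2 := hmax y hy
        simp only [List.length_append, List.length_singleton] at *
        omega
      · by_cases hlen : x.length = u'.length + 1
        · exact h.eq_of_length (by simpa using hlen)
        · have hle : x.length ≤ u'.length := by
            have := h.length_le
            simp only [List.length_append, List.length_singleton] at this
            omega
          have hx' : x <:+ u' := List.suffix_of_suffix_length_le h (List.suffix_append _ _) hle
          have := hU.1.2 x hx _ hvU (hx'.trans (List.suffix_append _ _))
          rw [this] at hle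
          simp at hle
      · exact hU.1.2 x hx y hy h
  have := hU.2.2 _ hW (by rintro x (rfl | hx); exacts [hc, hU.2.1 hx]) (Set.subset_insert _ _)
  exact this ▸ Set.mem_insert _ _

lemma lr_form (hFac : Factorial F) (hU : IsMaximalSuffixCodeIn F U)
    (hvU : [c0] ++ u' ∈ U) (hmax : ∀ x ∈ U, x.length ≤ u'.length + 1)
    {x : List A} (hx : x ∈ U) (hsuf : u' <:+ x) : ∃ c, x = [c] ++ u' := by
  obtain ⟨t, rfl⟩ := hsuf
  rcases eq_or_ne t [] with rfl | htne
  · rw [List.nil_append] at hx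
    exact absurd hx (lr_not_mem hU hvU)
  · have heq : t ++ u' = t.dropLast ++ ([t.getLast htne] ++ u') := by
      conv_lhs => rw [← List.dropLast_append_getLast htne]
      simp
    have hz : [t.getLast htne] ++ u' <:+ t ++ u' := by
      rw [heq]; exact List.suffix_append _ _
    have hzF : [t.getLast htne] ++ u' ∈ F := tsFac_suffix hFac (hU.2.1 hx) hz
    have hzU := lr_complete hFac hU hvU hmax hzF
    have := hU.1.2 _ hzU _ hx hz
    exact ⟨t.getLast htne, this.symm⟩

/-- the reduced suffix code. -/
def lrU' (U : Set (List A)) (u' : List A) : Set (List A) := insert u' {x ∈ U | ¬ u' <:+ x}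

lemma lr_U'_max (hFac : Factorial F) (hU : IsMaximalSuffixCodeIn F U)
    (hvU : [c0] ++ u' ∈ U) (hmax : ∀ x ∈ U, x.length ≤ u'.length + 1)
    (hu' : u' ≠ []) : IsMaximalSuffixCodeIn F (lrU' U u') := by
  have hcode : IsSuffixCode (lrU' U u') := by
    constructor
    · rintro x (rfl | ⟨hx, -⟩)
      · exact hu'
      · exact hU.1.1 x hx
    · rintro x (rfl | ⟨hx, hnx⟩) y (rfl | ⟨hy, hny⟩) h
      · rfl
      · exact absurd h hny
      · have := hU.1.2 x hx _ hvU (h.trans (List.suffix_append _ _))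
        rw [this] at h ⊢
        have := h.length_le
        simp at this
      · exact hU.1.2 x hx y hy h
  refine ⟨hcode, ?_, ?_⟩
  · rintro x (rfl | ⟨hx, -⟩)
    · exact tsFac_suffix hFac (hU.2.1 hvU) (List.suffix_append _ _)
    · exact hU.2.1 hx
  · intro W hW hWF hsub
    refine Set.Subset.antisymm hsub (fun x hx => ?_)
    by_cases hsuf : u' <:+ x
    · have : u' = x := hW.2 u' (hsub (Set.mem_insert _ _)) x hx hsuf
      rw [← this]
      exact Set.mem_insert _ _
    · have hxU : x ∈ U := by
        have hW'' : IsSuffixCode (insert x U) := by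
          constructor
          · rintro z (rfl | hz)
            · exact hW.1 _ hx
            · exact hU.1.1 z hz
          · rintro z (rfl | hz) y (rfl | hy) h
            · rfl
            · by_cases hpy : u' <:+ y
              · obtain ⟨c, rfl⟩ := lr_form hFac hU hvU hmax hy hpy
                by_cases hlen : z.length = u'.length + 1
                · exact h.eq_of_length (by simpa using hlen)
                · have hle : z.length ≤ u'.length := by
                    have := h.length_le
                    simp only [List.length_append, List.length_singleton] at this
                    omega
                  have hxv' : z <:+ u' :=
                    List.suffix_of_suffix_length_le h (List.suffix_append _ _) hle
                  have := hW.2 z hx u' (hsub (Set.mem_insert _ _)) hxv'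
                  exact absurd (this ▸ List.suffix_refl u') hsuf
              · exact hW.2 z hx y (hsub (Or.inr ⟨hy, hpy⟩)) h
            · by_cases hpz : u' <:+ z
              · exact absurd (hpz.trans h) hsuf
              · exact hW.2 z (hsub (Or.inr ⟨hz, hpz⟩)) y hx h
            · exact hU.1.2 z hz y hy h
        have := hU.2.2 _ hW'' (by rintro z (rfl | hz); exacts [hWF hx, hU.2.1 hz])
          (Set.subset_insert _ _)
        exact this ▸ Set.mem_insert _ _
      exact Or.inr ⟨hxU, hsuf⟩

lemma lr_U'_finite (u' : List A) (hUfin : U.Finite) : (lrU' U u').Finite :=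
  (hUfin.subset (Set.sep_subset _ _)).insert u'

lemma lr_measure (hU : IsMaximalSuffixCodeIn F U) (hUfin : U.Finite)
    (hvU : [c0] ++ u' ∈ U) (hu' : u' ≠ []) :
    tsM (lrU' U u') (lr_U'_finite u' hUfin) < tsM U hUfin := by
  classical
  have hv'len : 1 ≤ u'.length := by
    rcases u' with _ | _
    · exact absurd rfl hu'
    · simp
  have hvmem : [c0] ++ u' ∈ hUfin.toFinset := hUfin.mem_toFinset.mpr hvU
  have hsub : (lr_U'_finite u' hUfin).toFinset ⊆
      insert u' (hUfin.toFinset.erase ([c0] ++ u')) := by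
    intro x hx
    rw [Set.Finite.mem_toFinset] at hx
    rcases hx with rfl | ⟨hx, hnx⟩
    · exact Finset.mem_insert_self _ _
    · refine Finset.mem_insert_of_mem (Finset.mem_erase.mpr ⟨?_, hUfin.mem_toFinset.mpr hx⟩)
      rintro rfl
      exact hnx (List.suffix_append _ _)
  have hnm : u' ∉ hUfin.toFinset.erase ([c0] ++ u') := by
    intro h
    exact lr_not_mem hU hvU (hUfin.mem_toFinset.mp (Finset.mem_of_mem_erase h))
  have h1 : tsM (lrU' U u') (lr_U'_finite u' hUfin) ≤
      (u'.length - 1) + ∑ x ∈ hUfin.toFinset.erase ([c0] ++ u'), (x.length - 1) := by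
    calc tsM (lrU' U u') (lr_U'_finite u' hUfin)
        ≤ ∑ x ∈ insert u' (hUfin.toFinset.erase ([c0] ++ u')), (x.length - 1) :=
          Finset.sum_le_sum_of_subset hsub
      _ = _ := Finset.sum_insert hnm
  have h2 := Finset.add_sum_erase hUfin.toFinset (fun x => x.length - 1) hvmem
  simp only [List.length_append, List.length_singleton] at h2
  unfold tsM at h1 ⊢
  omega

/-- right-to-old-left relation. -/
def lrE1 (F U V : Set (List A)) (u' w : List A) :
    {r : List A // r ∈ V ∧ w ++ r ∈ F} →
    {l : List A // (l ∈ U ∧ ¬ u' <:+ l) ∧ l ++ w ∈ F} → Prop :=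
  fun r l => l.1 ++ w ++ r.1 ∈ F

/-- right-to-new-left relation. -/
def lrE2 (F V : Set (List A)) (u' w : List A) :
    {r : List A // r ∈ V ∧ w ++ r ∈ F} → {c : A // [c] ++ (u' ++ w) ∈ F} → Prop :=
  fun r c => [c.1] ++ (u' ++ w) ++ r.1 ∈ F

lemma lr_Niff (hFac : Factorial F) (hB : Biessential F)
    (r : {r : List A // r ∈ V ∧ w ++ r ∈ F}) :
    (∃ c : {c : A // [c] ++ (u' ++ w) ∈ F}, lrE2 F V u' w r c) ↔ u' ++ w ++ r.1 ∈ F := by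
  constructor
  · rintro ⟨c, hc⟩
    refine tsFac_suffix hFac (x := [c.1] ++ ((u' ++ w) ++ r.1)) ?_ (List.suffix_append _ _)
    simpa [lrE2, List.append_assoc] using hc
  · intro h
    obtain ⟨c, hc⟩ := tsBiess_left hB h
    have hγ : [c] ++ (u' ++ w) ∈ F := by
      refine tsFac_prefix hFac hc ?_
      rw [show [c] ++ (u' ++ w ++ r.1) = ([c] ++ (u' ++ w)) ++ r.1 by simp [List.append_assoc]]
      exact List.prefix_append _ _
    exact ⟨⟨c, hγ⟩, by simpa [lrE2, List.append_assoc] using hc⟩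

/-- vertex map for the `T₁` identification (left version). -/
def lrF1 (hwu : u' ++ w ∈ F) :
    ({l : List A // (l ∈ U ∧ ¬ u' <:+ l) ∧ l ++ w ∈ F} ⊕ Unit) →
    {l : List A // l ∈ lrU' U u' ∧ l ++ w ∈ F} :=
  fun x => Sum.elim
    (fun b => ⟨b.1, Set.mem_insert_iff.mpr (Or.inr ⟨b.2.1.1, b.2.1.2⟩), b.2.2⟩)
    (fun _ => ⟨u', Set.mem_insert _ _, hwu⟩) x

lemma lrF1_bij (hwu : u' ++ w ∈ F) : Function.Bijective (lrF1 (U := U) hwu) := by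
  constructor
  · rintro (b | ⟨⟩) (b' | ⟨⟩) h <;>
      simp only [lrF1, Sum.elim_inl, Sum.elim_inr, Subtype.mk.injEq] at h
    · exact congrArg Sum.inl (Subtype.ext h)
    · exact absurd (show u' <:+ b.1 by rw [h]) b.2.1.2
    · exact absurd (show u' <:+ b'.1 by rw [← h]) b'.2.1.2
    · rfl
  · rintro ⟨l, hl, hlw⟩
    rcases Set.mem_insert_iff.mp hl with rfl | ⟨hlU, hnp⟩
    · exact ⟨Sum.inr (), Subtype.ext rfl⟩
    · exact ⟨Sum.inl ⟨l, ⟨hlU, hnp⟩, hlw⟩, Subtype.ext rfl⟩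

/-- vertex map for the `S₂` left identification (left version). -/
def lrFa2 (hFac : Factorial F) (hB : Biessential F) :
    {a : {r : List A // r ∈ V ∧ w ++ r ∈ F} // ∃ c, lrE2 F V u' w a c} →
    {r : List A // r ∈ V ∧ (u' ++ w) ++ r ∈ F} :=
  fun x => ⟨x.1.1, x.1.2.1, (lr_Niff hFac hB x.1).mp x.2⟩

lemma lrFa2_bij (hFac : Factorial F) (hB : Biessential F) :
    Function.Bijective (lrFa2 (V := V) (u' := u') (w := w) hFac hB) := by
  constructor
  · rintro ⟨⟨r, hr⟩, hex⟩ ⟨⟨r', hr'⟩, hex'⟩ h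
    simp only [lrFa2, Subtype.mk.injEq] at h
    exact Subtype.ext (Subtype.ext h)
  · rintro ⟨r, hrV, hruw⟩
    have hwr : w ++ r ∈ F := by
      refine tsFac_suffix hFac hruw ?_
      rw [List.append_assoc]
      exact List.suffix_append _ _
    have hex : ∃ c, lrE2 F V u' w ⟨r, hrV, hwr⟩ c := by
      rw [lr_Niff hFac hB]
      exact hruw
    exact ⟨⟨⟨r, hrV, hwr⟩, hex⟩, Subtype.ext rfl⟩

/-- vertex map for the `S₂` right identification (left version). -/
def lrFb2 (hFac : Factorial F) :
    {c : A // [c] ++ (u' ++ w) ∈ F} →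
    {l : List A // l ∈ letterSet F ∧ l ++ (u' ++ w) ∈ F} :=
  fun c => ⟨[c.1], letterSet_mem (tsFac_prefix hFac c.2 (List.prefix_append _ _)), c.2⟩

lemma lrFb2_bij (hFac : Factorial F) :
    Function.Bijective (lrFb2 (u' := u') (w := w) hFac) := by
  constructor
  · rintro ⟨c, hc⟩ ⟨c', hc'⟩ h
    simp only [lrFb2, Subtype.mk.injEq, List.cons.injEq, and_true] at h
    exact Subtype.ext h
  · rintro ⟨l, ⟨c, rfl, hcF⟩, hlw⟩
    exact ⟨⟨c, hlw⟩, Subtype.ext rfl⟩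

/-- vertex map for the final identification (left version). -/
def lrF3 (hFac : Factorial F) (hU : IsMaximalSuffixCodeIn F U)
    (hvU : [c0] ++ u' ∈ U) (hmax : ∀ x ∈ U, x.length ≤ u'.length + 1) :
    ({l : List A // (l ∈ U ∧ ¬ u' <:+ l) ∧ l ++ w ∈ F} ⊕ {c : A // [c] ++ (u' ++ w) ∈ F}) →
    {l : List A // l ∈ U ∧ l ++ w ∈ F} :=
  fun x => Sum.elim
    (fun b => ⟨b.1, b.2.1.1, b.2.2⟩)
    (fun c => ⟨[c.1] ++ u',
      lr_complete hFac hU hvU hmax (tsFac_prefix hFac c.2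
        (by rw [show [c.1] ++ (u' ++ w) = ([c.1] ++ u') ++ w by simp]
            exact List.prefix_append _ _)),
      by simpa [List.append_assoc] using c.2⟩) x

lemma lrF3_bij (hFac : Factorial F) (hU : IsMaximalSuffixCodeIn F U)
    (hvU : [c0] ++ u' ∈ U) (hmax : ∀ x ∈ U, x.length ≤ u'.length + 1) :
    Function.Bijective (lrF3 (w := w) hFac hU hvU hmax) := by
  constructor
  · rintro (b | c) (b' | c') h <;>
      simp only [lrF3, Sum.elim_inl, Sum.elim_inr, Subtype.mk.injEq] at h
    · exact congrArg Sum.inl (Subtype.ext h)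
    · exact absurd (show u' <:+ b.1 by rw [h]; exact List.suffix_append _ _) b.2.1.2
    · exact absurd (show u' <:+ b'.1 by rw [← h]; exact List.suffix_append _ _) b'.2.1.2
    · simp only [List.singleton_append, List.cons.injEq] at h
      exact congrArg Sum.inr (Subtype.ext h.1)
  · rintro ⟨l, hlU, hlw⟩
    by_cases hsuf : u' <:+ l
    · obtain ⟨c, rfl⟩ := lr_form hFac hU hvU hmax hlU hsuf
      exact ⟨Sum.inr ⟨c, by simpa [List.append_assoc] using hlw⟩, Subtype.ext rfl⟩
    · exact ⟨Sum.inl ⟨l, ⟨hlU, hsuf⟩, hlw⟩, Subtype.ext rfl⟩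

/-- vertex map for the degenerate case (left version). -/
def lrFdeg (hnwu : u' ++ w ∉ F) :
    {l : List A // l ∈ lrU' U u' ∧ l ++ w ∈ F} → {l : List A // l ∈ U ∧ l ++ w ∈ F} :=
  fun x => ⟨x.1, (Set.mem_insert_iff.mp x.2.1).resolve_left
    (fun heq => hnwu (heq ▸ x.2.2)) |>.1, x.2.2⟩

lemma lrFdeg_bij (hFac : Factorial F) (hnwu : u' ++ w ∉ F) :
    Function.Bijective (lrFdeg (U := U) hnwu) := by
  constructor
  · rintro ⟨x, hx⟩ ⟨y, hy⟩ h
    simp only [lrFdeg, Subtype.mk.injEq] at h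
    exact Subtype.ext h
  · rintro ⟨l, hlU, hlw⟩
    refine ⟨⟨l, Set.mem_insert_iff.mpr (Or.inr ⟨hlU, ?_⟩), hlw⟩, rfl⟩
    rintro ⟨t, rfl⟩
    refine hnwu (tsFac_suffix hFac hlw ?_)
    rw [List.append_assoc]
    exact List.suffix_append _ _

lemma lr_isTree (hF : IsTreeSet F) (hw : w ∈ F)
    (hUfin : U.Finite) (hVfin : V.Finite)
    (hU : IsMaximalSuffixCodeIn F U)
    (hletters : (letterSet F).Finite)
    (hvU : [c0] ++ u' ∈ U) (hmax : ∀ x ∈ U, x.length ≤ u'.length + 1) (hu' : u' ≠ [])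
    (hT1 : (genExtGraph F (lrU' U u') V w).IsTree)
    (hS2 : ∀ w' ∈ F, (genExtGraph F (letterSet F) V w').IsTree) :
    (genExtGraph F U V w).IsTree := by
  have hFac : Factorial F := hF.1.1
  have hB : Biessential F := hF.1
  by_cases hwu : u' ++ w ∈ F
  · haveI : Finite {r : List A // r ∈ V ∧ w ++ r ∈ F} :=
      finite_sub' hVfin _ (fun l h => h.1)
    haveI : Finite {l : List A // (l ∈ U ∧ ¬ u' <:+ l) ∧ l ++ w ∈ F} :=
      finite_sub' hUfin _ (fun l h => h.1.1)
    haveI : Finite {c : A // [c] ++ (u' ++ w) ∈ F} :=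
      finite_letter hletters _ (fun c hc => tsFac_prefix hFac hc (List.prefix_append _ _))
    have hT1' : (bipGraph (fun (r : {r : List A // r ∈ V ∧ w ++ r ∈ F})
        (l : {l : List A // l ∈ lrU' U u' ∧ l ++ w ∈ F}) => l.1 ++ w ++ r.1 ∈ F)).IsTree :=
      tsIso_isTree (bipFlip _) hT1
    have h1 : (bipGraph (coreT1 (lrE1 F U V u' w) (lrE2 F V u' w))).IsTree := by
      refine bip_isTree_transfer' (Equiv.refl _)
        (Equiv.ofBijective (lrF1 hwu) (lrF1_bij hwu)) ?_ hT1'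
      rintro a (b | ⟨⟩)
      · exact Iff.rfl
      · exact lr_Niff hFac hB a
    have hS2' : (bipGraph (fun (r : {r : List A // r ∈ V ∧ (u' ++ w) ++ r ∈ F})
        (l : {l : List A // l ∈ letterSet F ∧ l ++ (u' ++ w) ∈ F}) =>
          l.1 ++ (u' ++ w) ++ r.1 ∈ F)).IsTree :=
      tsIso_isTree (bipFlip _) (hS2 (u' ++ w) hwu)
    have h2 : (bipGraph (coreS2 (lrE2 F V u' w))).IsTree := by
      refine bip_isTree_transfer' (Equiv.ofBijective (lrFa2 hFac hB) (lrFa2_bij hFac hB))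
        (Equiv.ofBijective (lrFb2 hFac) (lrFb2_bij hFac)) ?_ hS2'
      intro a c
      exact Iff.rfl
    have hG : (bipGraph (fun (r : {r : List A // r ∈ V ∧ w ++ r ∈ F})
        (l : {l : List A // l ∈ U ∧ l ++ w ∈ F}) => l.1 ++ w ++ r.1 ∈ F)).IsTree := by
      refine bip_isTree_transfer (Equiv.refl _)
        (Equiv.ofBijective (lrF3 hFac hU hvU hmax) (lrF3_bij hFac hU hvU hmax)) ?_
        (core_isTree (lrE1 F U V u' w) (lrE2 F V u' w) h1 h2)
      rintro a (b | c)
      · exact Iff.rfl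
      · show lrE2 F V u' w a c ↔ ([c.1] ++ u') ++ w ++ a.1 ∈ F
        constructor
        · intro h; simpa [lrE2, List.append_assoc] using h
        · intro h; simpa [lrE2, List.append_assoc] using h
    exact tsIso_isTree (SimpleGraph.Iso.symm (bipFlip _)) hG
  · refine bip_isTree_transfer
      (Equiv.ofBijective (lrFdeg hwu) (lrFdeg_bij hFac hwu)) (Equiv.refl _) ?_ hT1
    intro l r
    exact Iff.rfl

end LeftRed
section MainProof

lemma tsM_letterSet {F : Set (List A)} (h : (letterSet F).Finite) : tsM (letterSet F) h = 0 :=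
  Finset.sum_eq_zero (fun x hx => by
    obtain ⟨a, rfl, -⟩ := h.mem_toFinset.mp hx
    simp)

lemma tsM_pos {V : Set (List A)} (hVfin : V.Finite) {v : List A} (hv : v ∈ V)
    (hlen : 2 ≤ v.length) : 1 ≤ tsM V hVfin := by
  have := Finset.single_le_sum (f := fun x : List A => x.length - 1)
    (fun i _ => Nat.zero_le _) (hVfin.mem_toFinset.mpr hv)
  unfold tsM
  omega

lemma main_induction (n : ℕ) :
    ∀ (F : Set (List A)), IsTreeSet F →
    ∀ (U V : Set (List A)) (hUfin : U.Finite) (hVfin : V.Finite),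
      IsMaximalSuffixCodeIn F U → IsMaximalPrefixCodeIn F V →
      tsM U hUfin + tsM V hVfin ≤ n →
      ∀ w ∈ F, (genExtGraph F U V w).IsTree := by
  induction n using Nat.strong_induction_on with
  | _ n ih =>
    intro F hF U V hUfin hVfin hU hV hm w hw
    have hFac : Factorial F := hF.1.1
    have hletters : (letterSet F).Finite := letterSet_finite hVfin hV
    by_cases hVbig : ∃ v ∈ V, 2 ≤ v.length
    · -- reduce the prefix code
      obtain ⟨v0, hv0, hv0len⟩ := hVbig
      obtain ⟨v, hvmem, hvmax⟩ := hVfin.toFinset.exists_max_image List.length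
        ⟨v0, hVfin.mem_toFinset.mpr hv0⟩
      have hvV : v ∈ V := hVfin.mem_toFinset.mp hvmem
      have hvlen : 2 ≤ v.length := le_trans hv0len (hvmax v0 (hVfin.mem_toFinset.mpr hv0))
      have hvne : v ≠ [] := by
        intro h
        rw [h] at hvlen
        simp at hvlen
      have hvV' : v.dropLast ++ [v.getLast hvne] ∈ V := by
        rwa [List.dropLast_append_getLast hvne]
      have hdl : v.dropLast.length = v.length - 1 := List.length_dropLast
      have hv' : v.dropLast ≠ [] := by
        intro h
        have := congrArg List.length h
        simp [hdl] at this
        omega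
      have hmax' : ∀ x ∈ V, x.length ≤ v.dropLast.length + 1 := by
        intro x hx
        have := hvmax x (hVfin.mem_toFinset.mpr hx)
        omega
      have hmeas := rr_measure (a0 := v.getLast hvne) hV hVfin hvV' hv'
      have hVpos := tsM_pos hVfin hvV hvlen
      have hn1 : 1 ≤ n := by omega
      have hT1 := ih (n - 1) (by omega) F hF U (rrV' V v.dropLast) hUfin
        (rr_V'_finite v.dropLast hVfin) hU
        (rr_V'_max hFac hV hvV' hmax' hv') (by omega) w hw
      have hS2 : ∀ w' ∈ F, (genExtGraph F U (letterSet F) w').IsTree := by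
        intro w' hw'
        refine ih (n - 1) (by omega) F hF U (letterSet F) hUfin hletters hU
          (letterSet_maxPrefixCode hFac) ?_ w' hw'
        rw [tsM_letterSet]
        omega
      exact rr_isTree hF hw hUfin hVfin hV hletters hvV' hmax' hv' hT1 hS2
    · by_cases hUbig : ∃ u ∈ U, 2 ≤ u.length
      · -- reduce the suffix code
        obtain ⟨u0, hu0, hu0len⟩ := hUbig
        obtain ⟨u, humem, humax⟩ := hUfin.toFinset.exists_max_image List.length
          ⟨u0, hUfin.mem_toFinset.mpr hu0⟩
        have huU : u ∈ U := hUfin.mem_toFinset.mp humem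
        have hulen : 2 ≤ u.length := le_trans hu0len (humax u0 (hUfin.mem_toFinset.mpr hu0))
        have hune : u ≠ [] := by
          intro h
          rw [h] at hulen
          simp at hulen
        have huU' : [u.head hune] ++ u.tail ∈ U := by
          rwa [List.singleton_append, List.cons_head_tail]
        have hdl : u.tail.length = u.length - 1 := List.length_tail
        have hu' : u.tail ≠ [] := by
          intro h
          have := congrArg List.length h
          simp [hdl] at this
          omega
        have hmax' : ∀ x ∈ U, x.length ≤ u.tail.length + 1 := by
          intro x hx
          have := humax x (hUfin.mem_toFinset.mpr hx)
          omega
        have hmeas := lr_measure (c0 := u.head hune) hU hUfin huU' hu'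
        have hUpos := tsM_pos hUfin huU hulen
        have hn1 : 1 ≤ n := by omega
        have hT1 := ih (n - 1) (by omega) F hF (lrU' U u.tail) V
          (lr_U'_finite u.tail hUfin) hVfin
          (lr_U'_max hFac hU huU' hmax' hu') hV (by omega) w hw
        have hS2 : ∀ w' ∈ F, (genExtGraph F (letterSet F) V w').IsTree := by
          intro w' hw'
          refine ih (n - 1) (by omega) F hF (letterSet F) V hletters hVfin
            (letterSet_maxSuffixCode hFac) hV ?_ w' hw'
          rw [tsM_letterSet]
          omega
        exact lr_isTree hF hw hUfin hVfin hU hletters huU' hmax' hu' hT1 hS2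
      · -- base case
        push_neg at hVbig hUbig
        have hUeq := suffixCode_eq_letterSet hFac hU (fun x hx => by
          have := hUbig x hx
          omega)
        have hVeq := prefixCode_eq_letterSet hFac hV (fun x hx => by
          have := hVbig x hx
          omega)
        rw [hUeq, hVeq]
        exact base_isTree hF hw

end MainProof

/-- In a tree set `F`, for every `w ∈ F`, every finite `F`-maximal suffix code `U` and
every finite `F`-maximal prefix code `V`, the generalized extension graph `G_{U,V}(w)`
is a tree. -/
theorem genExtGraph_isTree (F : Set (List A)) (hF : IsTreeSet F) (w : List A) (hw : w ∈ F)
    (U V : Set (List A)) (hUfin : U.Finite) (hU : IsMaximalSuffixCodeIn F U)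
    (hVfin : V.Finite) (hV : IsMaximalPrefixCodeIn F V) :
    (genExtGraph F U V w).IsTree := by
  exact main_induction (tsM U hUfin + tsM V hVfin) F hF U V hUfin hVfin hU hV le_rfl w hw
end

section
/- Let F be a tree set over A with A ⊆ F. For every n ≥ 0 and every vertex v of the Rauzy graph G_n of F, the group defined by G_n with respect to v is the whole free group on A. -/
open List

variable {A : Type*}

theorem GenPathLabel.trans {V : Type*} {E : V → A → V → Prop} {p q r : V} {g h : FreeGroup A}
    (h1 : GenPathLabel E p q g) (h2 : GenPathLabel E q r h) :
    GenPathLabel E p r (g * h) := by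
  induction h2 with
  | nil => simpa using h1
  | fwd hp e ih => rw [← mul_assoc]; exact ih.fwd e
  | bwd hp e ih => rw [← mul_assoc]; exact ih.bwd e

/-- Any two vertices of `G_{n+1}` with the same tail `w` are joined by a generalized
path with label `1`, thanks to the connectedness of the extension graph of `w`. -/
lemma rauzy_chunk {F : Set (List A)} (hF : IsTreeSet F) {n : ℕ}
    (W : RauzyVertex F n)
    (p q : RauzyVertex F (n + 1)) (hp : p.1.tail = W.1) (hq : q.1.tail = W.1) :
    GenPathLabel (RauzyEdge F (n + 1)) p q 1 := by
  classical
  obtain ⟨w, hw, hlen⟩ := W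
  simp only at hp hq
  set V : ({a : A // a ∈ LeftExt F w} ⊕ {b : A // b ∈ RightExt F w}) → RauzyVertex F (n + 1) :=
    Sum.elim (fun a => ⟨a.1 :: w, a.2, by simp [hlen]⟩)
      (fun b => ⟨w ++ [b.1], b.2, by simp [hlen]⟩) with hV
  set δ : ({a : A // a ∈ LeftExt F w} ⊕ {b : A // b ∈ RightExt F w}) → FreeGroup A :=
    Sum.elim (fun _ => 1) (fun b => FreeGroup.of b.1) with hδ
  have step : ∀ x y, (extensionGraph F w).Adj x y →
      GenPathLabel (RauzyEdge F (n + 1)) (V x) (V y) ((δ x)⁻¹ * δ y) := by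
    rintro x y ⟨a, b, hab, (⟨rfl, rfl⟩ | ⟨rfl, rfl⟩)⟩
    · have e : RauzyEdge F (n + 1) (V (Sum.inl a)) b.1 (V (Sum.inr b)) :=
        ⟨hab, a.1, rfl⟩
      simpa [hδ] using (GenPathLabel.nil (V (Sum.inl a))).fwd e
    · have e : RauzyEdge F (n + 1) (V (Sum.inl a)) b.1 (V (Sum.inr b)) :=
        ⟨hab, a.1, rfl⟩
      simpa [hδ] using (GenPathLabel.nil (V (Sum.inr b))).bwd e
  have walkLem : ∀ x y, (extensionGraph F w).Walk x y →
      GenPathLabel (RauzyEdge F (n + 1)) (V x) (V y) ((δ x)⁻¹ * δ y) := by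
    intro x y wk
    induction wk with
    | nil => simpa using GenPathLabel.nil (V _)
    | cons h wk ih => simpa [mul_assoc] using (step _ _ h).trans ih
  have hpne : p.1 ≠ [] := by
    intro h; have := p.2.2; rw [h] at this; simp at this
  have hqne : q.1 ≠ [] := by
    intro h; have := q.2.2; rw [h] at this; simp at this
  have hp1 : p.1.head hpne :: w = p.1 := by
    conv_rhs => rw [← List.cons_head_tail hpne]
    rw [hp]
  have hq1 : q.1.head hqne :: w = q.1 := by
    conv_rhs => rw [← List.cons_head_tail hqne]
    rw [hq]
  have hbL : p.1.head hpne ∈ LeftExt F w := by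
    show p.1.head hpne :: w ∈ F; rw [hp1]; exact p.2.1
  have hbL' : q.1.head hqne ∈ LeftExt F w := by
    show q.1.head hqne :: w ∈ F; rw [hq1]; exact q.2.1
  obtain ⟨wk⟩ := ((hF.2 w hw).isConnected.preconnected
    (Sum.inl ⟨p.1.head hpne, hbL⟩) (Sum.inl ⟨q.1.head hqne, hbL'⟩))
  have := walkLem _ _ wk
  have hVp : V (Sum.inl ⟨p.1.head hpne, hbL⟩) = p := Subtype.ext hp1
  have hVq : V (Sum.inl ⟨q.1.head hqne, hbL'⟩) = q := Subtype.ext hq1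
  rw [hVp, hVq] at this
  simpa [hδ] using this

/-- Lifting lemma: a generalized path in `G_n` lifts to a generalized path with the
same label in `G_{n+1}` between any lifts of the endpoints. -/
lemma rauzy_lift {F : Set (List A)} (hF : IsTreeSet F) {n : ℕ}
    {W W' : RauzyVertex F n} {g : FreeGroup A}
    (h : GenPathLabel (RauzyEdge F n) W W' g) :
    ∀ p q : RauzyVertex F (n + 1), p.1.tail = W.1 → q.1.tail = W'.1 →
      GenPathLabel (RauzyEdge F (n + 1)) p q g := by
  have hFac : Factorial F := hF.1.1
  induction h with
  | nil =>
    intro p q hp hq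
    exact rauzy_chunk hF _ p q hp hq
  | @fwd Q R g a hpath e ih =>
    intro p q hp hq
    obtain ⟨hQa, b, hb⟩ := e
    obtain ⟨c, d, hcd⟩ := hF.1.2 _ hQa
    have hc : c :: (Q.1 ++ [a]) ∈ F := hFac hcd ⟨[], [d], by simp⟩
    have hmidF : c :: Q.1 ∈ F := hFac hc ⟨[], [a], by simp⟩
    set mid : RauzyVertex F (n + 1) := ⟨c :: Q.1, hmidF, by simp [Q.2.2]⟩ with hmid
    set target : RauzyVertex F (n + 1) := ⟨Q.1 ++ [a], hQa, by simp [Q.2.2]⟩ with htgt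
    have edge : RauzyEdge F (n + 1) mid a target := ⟨hc, c, by simp [hmid, htgt]⟩
    have h1 := (ih p mid hp rfl).fwd edge
    have h3 : target.1.tail = R.1 := by
      show (Q.1 ++ [a]).tail = R.1
      rw [hb, List.tail_cons]
    have h4 := rauzy_chunk hF R target q h3 hq
    simpa using h1.trans h4
  | @bwd Q R g a hpath e ih =>
    intro p q hp hq
    obtain ⟨hRa, b, hb⟩ := e
    obtain ⟨c, d, hcd⟩ := hF.1.2 _ hRa
    have hc : c :: (R.1 ++ [a]) ∈ F := hFac hcd ⟨[], [d], by simp⟩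
    have hmidF : c :: R.1 ∈ F := hFac hc ⟨[], [a], by simp⟩
    set mid : RauzyVertex F (n + 1) := ⟨c :: R.1, hmidF, by simp [R.2.2]⟩ with hmid
    set target : RauzyVertex F (n + 1) := ⟨R.1 ++ [a], hRa, by simp [R.2.2]⟩ with htgt
    have htt : target.1.tail = Q.1 := by
      show (R.1 ++ [a]).tail = Q.1
      rw [hb, List.tail_cons]
    have edge : RauzyEdge F (n + 1) mid a target := ⟨hc, c, by simp [hmid, htgt]⟩
    have h1 := (ih p target hp htt).bwd edge
    have h4 := rauzy_chunk hF R mid q rfl hq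
    simpa using h1.trans h4

/-- The group defined by any Rauzy graph of a tree set containing the alphabet, with
respect to any vertex, is the whole free group on `A`. -/
theorem rauzy_pathGroup_eq_top (F : Set (List A)) (hF : IsTreeSet F)
    (hAF : ∀ a : A, [a] ∈ F) (n : ℕ) (vtx : RauzyVertex F n) :
    {g : FreeGroup A | GenPathLabel (RauzyEdge F n) vtx vtx g} = Set.univ := by
  ext g
  simp only [Set.mem_setOf_eq, Set.mem_univ, iff_true]
  induction n with
  | zero =>
    have hnil : vtx.1 = [] := List.eq_nil_of_length_eq_zero vtx.2.2
    have loop : ∀ a : A, RauzyEdge F 0 vtx a vtx := fun a =>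
      ⟨by simp [hnil, hAF a], a, by simp [hnil]⟩
    refine FreeGroup.induction_on g (GenPathLabel.nil vtx) (fun x => ?_) (fun x _ => ?_)
      (fun x y hx hy => hx.trans hy)
    · simpa using (GenPathLabel.nil vtx).fwd (loop x)
    · simpa using (GenPathLabel.nil vtx).bwd (loop x)
  | succ n ih =>
    have hW : vtx.1.tail ∈ F := hF.1.1 vtx.2.1 (List.tail_suffix _).isInfix
    have hWl : vtx.1.tail.length = n := by simp [vtx.2.2]
    exact rauzy_lift hF (ih ⟨vtx.1.tail, hW, hWl⟩) vtx vtx rfl rfl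
end

section
/- Let F be a tree set. For each n ≥ 1, the quotient labeled graph G_n/θ_n is isomorphic, as a labeled graph, to the Rauzy graph G_{n−1}. -/
open List

variable {A : Type*}

/-- The generating pairs of the equivalence `θ_n` on the vertices of the Rauzy graph
`G_n`: `(ax, bx)` for `a, b ∈ L(x)` connected by a path in the extension graph `G(x)`. -/
def thetaBase (F : Set (List A)) (n : ℕ) (p q : RauzyVertex F n) : Prop :=
  ∃ (x : List A) (a b : A) (ha : a ∈ LeftExt F x) (hb : b ∈ LeftExt F x),
    p.1 = a :: x ∧ q.1 = b :: x ∧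
      (extensionGraph F x).Reachable (Sum.inl ⟨a, ha⟩) (Sum.inl ⟨b, hb⟩)

/-- For a tree set `F` and `n ≥ 1`, the quotient labeled graph `G_n/θ_n` is isomorphic,
as a labeled graph, to the Rauzy graph `G_{n-1}`. -/
theorem quotient_rauzy_iso (F : Set (List A)) (hF : IsTreeSet F) (n : ℕ) (hn : 1 ≤ n) :
    ∃ φ : Quot (thetaBase F n) ≃ RauzyVertex F (n - 1),
      ∀ (P Q : Quot (thetaBase F n)) (a : A),
        (∃ p q : RauzyVertex F n,
            Quot.mk (thetaBase F n) p = P ∧ Quot.mk (thetaBase F n) q = Q ∧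
              RauzyEdge F n p a q) ↔
          RauzyEdge F (n - 1) (φ P) a (φ Q) := by
  obtain ⟨⟨hfac, hbe⟩, htree⟩ := hF
  have hlext : ∀ w ∈ F, ∃ a : A, a :: w ∈ F := by
    intro w hw
    obtain ⟨a, b, hab⟩ := hbe w hw
    exact ⟨a, hfac hab ⟨[], [b], by simp⟩⟩
  have hne : ∀ p : RauzyVertex F n, p.1 ≠ [] := by
    intro p h
    have h2 := p.2.2
    rw [h] at h2
    simp at h2
    omega
  have hmemtail : ∀ p : RauzyVertex F n, p.1.tail ∈ F ∧ p.1.tail.length = n - 1 := by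
    intro p
    refine ⟨hfac p.2.1 ?_, by simp [p.2.2]⟩
    obtain ⟨u, hu⟩ := p.1.tail_suffix
    exact ⟨u, [], by simp [hu]⟩
  set f : RauzyVertex F n → RauzyVertex F (n - 1) :=
    fun p => ⟨p.1.tail, hmemtail p⟩ with hfdef
  have hf : ∀ p q, thetaBase F n p q → f p = f q := by
    rintro p q ⟨x, a, b, ha, hb, hp, hq, -⟩
    apply Subtype.ext
    simp [hfdef, hp, hq]
  set g : Quot (thetaBase F n) → RauzyVertex F (n - 1) := Quot.lift f hf with hgdef
  have hinj0 : ∀ p q : RauzyVertex F n, f p = f q → Quot.mk (thetaBase F n) p = Quot.mk (thetaBase F n) q := by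
    intro p q h
    obtain ⟨c, t, hct⟩ := List.exists_cons_of_ne_nil (hne p)
    obtain ⟨d, s, hds⟩ := List.exists_cons_of_ne_nil (hne q)
    have htail : p.1.tail = q.1.tail := congrArg Subtype.val h
    rw [hct, hds] at htail
    simp only [List.tail_cons] at htail
    subst htail
    have hcF : c ∈ LeftExt F t := by
      have hp1 := p.2.1; rw [hct] at hp1; exact hp1
    have hdF : d ∈ LeftExt F t := by
      have hq1 := q.2.1; rw [hds] at hq1; exact hq1
    have htF : t ∈ F := hfac p.2.1 (by rw [hct]; exact ⟨[c], [], by simp⟩)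
    apply Quot.sound
    exact ⟨t, c, d, hcF, hdF, hct, hds,
      (htree t htF).isConnected.preconnected _ _⟩
  have hinj : Function.Injective g := by
    intro P Q
    induction P using Quot.ind with | _ p =>
    induction Q using Quot.ind with | _ q =>
    exact hinj0 p q
  have hsurj : Function.Surjective g := by
    intro y
    obtain ⟨a, ha⟩ := hlext y.1 y.2.1
    refine ⟨Quot.mk _ ⟨a :: y.1, ha, by simp [y.2.2]; omega⟩, ?_⟩
    exact Subtype.ext (by simp [hgdef, hfdef])
  refine ⟨Equiv.ofBijective g ⟨hinj, hsurj⟩, ?_⟩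
  intro P Q a
  constructor
  · rintro ⟨p, q, rfl, rfl, hmem, b, heq⟩
    show RauzyEdge F (n - 1) (f p) a (f q)
    obtain ⟨c, t, hct⟩ := List.exists_cons_of_ne_nil (hne p)
    have hq1 : q.1 = t ++ [a] := by
      rw [hct] at heq
      simp only [List.cons_append, List.cons.injEq] at heq
      exact heq.2.symm
    have hpt : p.1.tail = t := by rw [hct]; rfl
    have hqt : q.1.tail ≠ [] ∨ True := Or.inr trivial
    constructor
    · refine hfac hmem ?_
      obtain ⟨u, hu⟩ := p.1.tail_suffix
      exact ⟨u, [], by rw [List.append_nil, ← List.append_assoc, hu]⟩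
    · obtain ⟨d, s, hds⟩ := List.exists_cons_of_ne_nil (hne q)
      refine ⟨d, ?_⟩
      show p.1.tail ++ [a] = d :: q.1.tail
      rw [hpt, ← hq1, hds]
      rfl
  · intro h
    obtain ⟨hmem, b, hby⟩ := h
    set x := Equiv.ofBijective g ⟨hinj, hsurj⟩ P with hxdef
    set y := Equiv.ofBijective g ⟨hinj, hsurj⟩ Q with hydef
    obtain ⟨c, hc⟩ := hlext (x.1 ++ [a]) hmem
    have hpmem : c :: x.1 ∈ F := hfac hc ⟨[], [a], by simp⟩
    refine ⟨⟨c :: x.1, hpmem, by simp [x.2.2]; omega⟩,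
            ⟨x.1 ++ [a], hmem, by simp [x.2.2]; omega⟩, ?_, ?_, hc, ⟨c, rfl⟩⟩
    · apply hinj
      show f _ = x
      exact Subtype.ext rfl
    · apply hinj
      show f _ = y
      refine Subtype.ext ?_
      show (x.1 ++ [a]).tail = y.1
      rw [hby]
      rfl
end

section
/- If F is a tree set containing at least two distinct letters of A (Card(A ∩ F) ≥ 2), then F is not periodic. -/
open List

variable {A : Type*}

section TreeSetNotPeriodicHelpers

lemma wordPow_succ' (w : List A) (m : ℕ) : wordPow w (m+1) = w ++ wordPow w m := by
  simp [wordPow, List.replicate_succ]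

lemma wordPow_comm' (w : List A) (m : ℕ) : w ++ wordPow w m = wordPow w m ++ w := by
  induction m with
  | zero => simp [wordPow]
  | succ m ih => rw [wordPow_succ', ih, ← List.append_assoc, ih]

lemma wordPow_period' (w : List A) (m i : ℕ) (h : i + w.length < (wordPow w m).length) :
    (wordPow w m)[i]'(by omega) = (wordPow w m)[i + w.length] := by
  have hc : wordPow w m ++ w = w ++ wordPow w m := (wordPow_comm' w m).symm
  have h1 : (wordPow w m)[i + w.length] = (wordPow w m ++ w)[i + w.length]'(by simp; omega) :=
    (List.getElem_append_left (by omega)).symm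
  rw [h1]
  have h2 : (wordPow w m ++ w)[i + w.length]'(by simp; omega)
      = (w ++ wordPow w m)[i + w.length]'(by simp; omega) := by
    congr 1
  rw [h2, List.getElem_append_right (by omega)]
  congr 1
  omega

lemma infix_getElem' {x s v t : List A} (h : s ++ v ++ t = x) (i : ℕ) (hi : i < v.length) :
    x[s.length + i]'(by subst h; simp; omega) = v[i] := by
  subst h
  rw [List.getElem_append_left (by simp; omega), List.getElem_append_right (by omega)]
  congr 1
  omega

lemma leftExt_unique' (w u : List A) (hu : u.length = w.length)
    {a b : A} {m m' : ℕ} (ha : (a :: u) <:+: wordPow w m) (hb : (b :: u) <:+: wordPow w m') :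
    a = b := by
  obtain ⟨s, t, hs⟩ := ha
  obtain ⟨s', t', hs'⟩ := hb
  have hw : 0 < w.length := by
    rcases Nat.eq_zero_or_pos w.length with h0 | h0
    · exfalso
      have : w = [] := List.length_eq_zero_iff.mp h0
      subst this
      have : wordPow ([] : List A) m = [] := by simp [wordPow]
      rw [this] at hs
      simpa using congrArg List.length hs
    · exact h0
  have key : ∀ (c : A) (s t : List A) (n : ℕ) (h : s ++ (c :: u) ++ t = wordPow w n),
      c = u[w.length - 1]'(by omega) := by
    intro c s t n h
    have hlen : s.length + (w.length + 1) + t.length ≤ (wordPow w n).length := by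
      have := congrArg List.length h
      simp at this
      omega
    have h0 : (wordPow w n)[s.length + 0]'(by omega) = (c :: u)[0] :=
      infix_getElem' h 0 (by simp)
    have hk : (wordPow w n)[s.length + w.length]'(by omega)
        = (c :: u)[w.length]'(by simp; omega) :=
      infix_getElem' h w.length (by simp; omega)
    have hp : (wordPow w n)[s.length]'(by omega) = (wordPow w n)[s.length + w.length]'(by omega) :=
      wordPow_period' w n s.length (by omega)
    have h0' : (wordPow w n)[s.length]'(by omega) = c := by simpa using h0
    have hk' : (c :: u)[w.length]'(by simp; omega) = u[w.length - 1]'(by omega) := by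
      simp [List.getElem_cons, hw.ne']
    rw [h0', hk, hk'] at hp
    exact hp
  rw [key a s t m hs, key b s' t' m' hs']

lemma two_of_ncard' {α : Type*} {s : Set α} (h : 2 ≤ s.ncard) :
    ∃ a ∈ s, ∃ b ∈ s, a ≠ b := by
  have hfin : s.Finite := by
    by_contra hinf
    rw [Set.Infinite.ncard (show s.Infinite from hinf)] at h
    omega
  obtain ⟨a, b, ha, hb, hab⟩ := (Set.one_lt_ncard_iff hfin).1 (by omega)
  exact ⟨a, ha, b, hb, hab⟩

lemma ncard_two' {α : Type*} {s : Set α} (hfin : s.Finite) {a b : α}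
    (ha : a ∈ s) (hb : b ∈ s) (hab : a ≠ b) : 2 ≤ s.ncard := by
  have := (Set.one_lt_ncard_iff hfin).2 ⟨a, b, ha, hb, hab⟩
  omega

lemma bip_path_two' {α β : Type*} (E : α → β → Prop) {a b : α}
    (p : (bipGraph E).Walk (Sum.inl a) (Sum.inl b)) (hp : p.IsPath) (hab : a ≠ b) :
    ∃ c : β, ∃ a' : α, E a c ∧ E a' c ∧ a ≠ a' := by
  cases p with
  | nil => exact absurd rfl hab
  | @cons _ v _ h q =>
    obtain ⟨a1, c, hE, hor⟩ := h
    rcases hor with ⟨h1, h2⟩ | ⟨h1, h2⟩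
    · obtain rfl : a1 = a := by injection h1.symm
      subst h2
      cases q with
      | @cons _ v2 _ h2 q2 =>
        obtain ⟨a2, c2, hE2, hor2⟩ := h2
        rcases hor2 with ⟨g1, g2⟩ | ⟨g1, g2⟩
        · exact absurd g1 (by simp)
        · obtain rfl : c2 = c := by injection g1.symm
          subst g2
          refine ⟨_, a2, hE, hE2, ?_⟩
          intro hcontra
          subst hcontra
          have := hp.support_nodup
          exact (List.nodup_cons.mp this).1 (List.mem_cons_of_mem _ q2.start_mem_support)
    · exact absurd h1 (by simp)

lemma leftSpecial_extend' (F : Set (List A)) (hF : IsTreeSet F)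
    (hfin : ∀ v : List A, (LeftExt F v).Finite)
    (x : List A) (hx : x ∈ F) (hs : LeftSpecial F x) :
    ∃ c : A, (x ++ [c]) ∈ F ∧ LeftSpecial F (x ++ [c]) := by
  classical
  obtain ⟨a, ha, b, hb, hab⟩ := two_of_ncard' hs
  have htree := hF.2 x hx
  have hreach := htree.isConnected.preconnected
    (Sum.inl ⟨a, ha⟩ : {a : A // a ∈ LeftExt F x} ⊕ {b : A // b ∈ RightExt F x})
    (Sum.inl ⟨b, hb⟩)
  obtain ⟨wlk⟩ := hreach
  obtain ⟨p, hp⟩ : ∃ p : (extensionGraph F x).Walk (Sum.inl ⟨a, ha⟩) (Sum.inl ⟨b, hb⟩),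
      p.IsPath := ⟨wlk.toPath.1, wlk.toPath.2⟩
  obtain ⟨c, a', hE, hE2, haa⟩ := bip_path_two' _ p hp
    (by intro h; exact hab (congrArg Subtype.val h))
  refine ⟨c.1, ?_, ?_⟩
  · exact hF.1.1 hE ⟨[a], [], by simp⟩
  · have h1 : a ∈ LeftExt F (x ++ [c.1]) := hE
    have h2 : a'.1 ∈ LeftExt F (x ++ [c.1]) := hE2
    exact ncard_two' (hfin _) h1 h2 (fun h => haa (Subtype.ext h))

end TreeSetNotPeriodicHelpers

/-- A tree set containing at least two distinct letters is not periodic. -/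
theorem treeSet_not_periodic (F : Set (List A)) (hF : IsTreeSet F)
    (h2 : ∃ a b : A, a ≠ b ∧ [a] ∈ F ∧ [b] ∈ F) :
    ¬ Periodic F := by
  rintro ⟨w, hw⟩
  obtain ⟨a, b, hab, haF, hbF⟩ := h2
  have hfact : Factorial F := hF.1.1
  have hfin : ∀ v : List A, (LeftExt F v).Finite := by
    intro v
    apply (List.finite_toSet w).subset
    intro c hc
    have hcv : c :: v ∈ F := hc
    rw [hw] at hcv
    obtain ⟨n, s, t, hst⟩ := hcv
    have hcmem : c ∈ wordPow w n := by
      rw [← hst]; simp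
    simp only [wordPow, List.mem_flatten] at hcmem
    obtain ⟨l, hl, hcl⟩ := hcmem
    rw [List.eq_of_mem_replicate hl] at hcl
    exact hcl
  have hεF : [] ∈ F := hfact haF ⟨[], [a], by simp⟩
  have hε : LeftSpecial F [] :=
    ncard_two' (hfin []) (show a ∈ LeftExt F [] from haF) (show b ∈ LeftExt F [] from hbF) hab
  have main : ∀ n, ∃ x, x ∈ F ∧ x.length = n ∧ LeftSpecial F x := by
    intro n
    induction n with
    | zero => exact ⟨[], hεF, rfl, hε⟩
    | succ n ih =>
      obtain ⟨x, hx, hlen, hsx⟩ := ih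
      obtain ⟨c, h1', h2'⟩ := leftSpecial_extend' F hF hfin x hx hsx
      exact ⟨x ++ [c], h1', by simp [hlen], h2'⟩
  obtain ⟨x, hx, hlen, hsx⟩ := main w.length
  obtain ⟨a', ha', b', hb', hab'⟩ := two_of_ncard' hsx
  have hA : a' :: x ∈ F := ha'
  have hB : b' :: x ∈ F := hb'
  rw [hw] at hA hB
  obtain ⟨m, hm⟩ := hA
  obtain ⟨m', hm'⟩ := hB
  exact hab' (leftExt_unique' w x hlen hm hm')
end
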